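/- arXiv:1107.2888 — 8 statements merged into one kernel-verified Lean document; each statement's English description precedes it below -/
import Mathlib

section
/- For every ε > 0 and every M there exists an integer n ≥ M and a 2-coloring c of Z_n such that M_4(n,c) ≤ (1/12 + ε)·n². (Equivalently, the lower limit as n → ∞ of min_c M_4(n,c)/n² is at most 1/12.) -/
/-- Number of monochromatic `k`-APs in `Z_n` under the 2-coloring `c`:
pairs `(a,d)` with `c a = c (a+d) = ⋯ = c (a+(k-1)d)`. -/
noncomputable def monoAPCount (n k : ℕ) (c : ZMod n → Fin 2) : ℕ :=
  Set.ncard {p : ZMod n × ZMod n | ∀ i < k, c (p.1 + i • p.2) = c p.1}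

def Aw : ℕ → Fin 2 := fun w => if w = 3 ∨ w = 6 ∨ w = 8 ∨ w = 9 ∨ w = 10 then 1 else 0

def liftC (m : ℕ) (u : ZMod m → Fin 2) : ZMod (11*m) → Fin 2 :=
  fun x => if x.val % 11 = 5 then u ((x.val / 11 : ℕ) : ZMod m) else Aw (x.val % 11)

def monoP (n k : ℕ) (c : ZMod n → Fin 2) : ZMod n × ZMod n → Prop :=
  fun p => ∀ i < k, c (p.1 + i • p.2) = c p.1

instance (n k c) : DecidablePred (monoP n k c) := fun _ =>
  inferInstanceAs (Decidable (∀ i, i < k → _ = _))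

-- finite check: A has no nondeg mono 4-AP, robustly at position 5
lemma Aw_fact : ∀ r < 11, ∀ k < 11, k ≠ 0 →
    ∃ i < 4, ∃ j < 4, (r+i*k)%11 ≠ 5 ∧ (r+j*k)%11 ≠ 5 ∧
      Aw ((r+i*k)%11) ≠ Aw ((r+j*k)%11) := by decide

lemma val_key {m : ℕ} (hm : 0 < m) (y w : ℕ) (hw : w < 11) :
    (((11*y + w : ℕ) : ZMod (11*m))).val = 11*(y % m) + w := by
  have : NeZero (11*m) := ⟨by positivity⟩
  rw [ZMod.val_natCast]
  have h1 : y % m < m := Nat.mod_lt _ hm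
  have h2 : 11*y + w = (11*m)*(y/m) + (11*(y%m) + w) := by
    have := Nat.div_add_mod y m
    have hmq : m * (y/m) + y % m = y := this
    nlinarith [Nat.div_add_mod y m]
  rw [h2, Nat.mul_add_mod, Nat.mod_eq_of_lt (by omega)]

lemma liftC_eval {m : ℕ} (hm : 0 < m) (u : ZMod m → Fin 2) (y w : ℕ) (hw : w < 11) :
    liftC m u ((11*y + w : ℕ) : ZMod (11*m)) =
      if w = 5 then u (y : ZMod m) else Aw w := by
  unfold liftC
  rw [val_key hm y w hw]
  have h1 : (11*(y%m) + w) % 11 = w := by omega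
  have h2 : (11*(y%m) + w) / 11 = y % m := by omega
  rw [h1, h2, ZMod.natCast_mod]

lemma point_formula {m : ℕ} (hm : 0 < m) (u : ZMod m → Fin 2)
    (y z w v i : ℕ) (hw : w < 11) (hv : v < 11) :
    liftC m u (((11*y + w : ℕ) : ZMod (11*m)) + i • ((11*z + v : ℕ) : ZMod (11*m))) =
      if (w + i*v) % 11 = 5 then u ((y + i*z + (w + i*v)/11 : ℕ) : ZMod m)
      else Aw ((w + i*v) % 11) := by
  have harg : ((11*y + w : ℕ) : ZMod (11*m)) + i • ((11*z + v : ℕ) : ZMod (11*m)) =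
      ((11*(y + i*z + (w+i*v)/11) + (w+i*v)%11 : ℕ) : ZMod (11*m)) := by
    have h : 11*(y + i*z + (w+i*v)/11) + (w+i*v)%11 = (11*y+w) + i*(11*z+v) := by
      have := Nat.div_add_mod (w + i*v) 11
      have h2 : i*(11*z+v) = 11*(i*z) + i*v := by ring
      omega
    rw [nsmul_eq_mul]
    calc ((11*y + w : ℕ) : ZMod (11*m)) + (i : ZMod (11*m)) * ((11*z + v : ℕ) : ZMod (11*m))
        = (((11*y+w) + i*(11*z+v) : ℕ) : ZMod (11*m)) := by push_cast; ring
      _ = ((11*(y + i*z + (w+i*v)/11) + (w+i*v)%11 : ℕ) : ZMod (11*m)) := by rw [h]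
  rw [harg, liftC_eval hm u _ _ (Nat.mod_lt _ (by norm_num))]

lemma decomp {m : ℕ} (hm : 0 < m) (a : ZMod (11*m)) :
    a = ((11*(a.val/11) + a.val%11 : ℕ) : ZMod (11*m)) := by
  have : NeZero (11*m) := ⟨by positivity⟩
  rw [Nat.div_add_mod, ZMod.natCast_val, ZMod.cast_id]

lemma val_div_lt {m : ℕ} (hm : 0 < m) (a : ZMod (11*m)) : a.val / 11 < m := by
  have : NeZero (11*m) := ⟨by positivity⟩
  have := a.val_lt
  omega

-- colors along the AP, in terms of the digit data
lemma color_ap {m : ℕ} (hm : 0 < m) (u : ZMod m → Fin 2) (a d : ZMod (11*m)) (i : ℕ) :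
    liftC m u (a + i • d) =
      if (a.val%11 + i*(d.val%11)) % 11 = 5 then
        u ((a.val/11 + i*(d.val/11) + (a.val%11 + i*(d.val%11))/11 : ℕ) : ZMod m)
      else Aw ((a.val%11 + i*(d.val%11)) % 11) := by
  conv_lhs => rw [decomp hm a, decomp hm d]
  exact point_formula hm u _ _ _ _ i (Nat.mod_lt _ (by norm_num)) (Nat.mod_lt _ (by norm_num))

lemma color_self {m : ℕ} (hm : 0 < m) (u : ZMod m → Fin 2) (a : ZMod (11*m)) :
    liftC m u a =
      if a.val%11 = 5 then u ((a.val/11 : ℕ) : ZMod m) else Aw (a.val%11) := rfl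

-- Case k ≠ 0 : no monochromatic APs
lemma case_kne {m : ℕ} (hm : 0 < m) (u : ZMod m → Fin 2) (a d : ZMod (11*m))
    (hd : d.val % 11 ≠ 0) : ¬ monoP (11*m) 4 (liftC m u) (a, d) := by
  intro hP
  obtain ⟨i, hi4, j, hj4, h1, h2, h3⟩ :=
    Aw_fact (a.val%11) (Nat.mod_lt _ (by norm_num)) (d.val%11) (Nat.mod_lt _ (by norm_num)) hd
  have ci := hP i hi4
  have cj := hP j hj4
  rw [color_ap hm u a d i, if_neg h1] at ci
  rw [color_ap hm u a d j, if_neg h2] at cj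
  exact h3 (ci.trans cj.symm)

-- Case k = 0, r ≠ 5 : always monochromatic
lemma case_k0_rne {m : ℕ} (hm : 0 < m) (u : ZMod m → Fin 2) (a d : ZMod (11*m))
    (hd : d.val % 11 = 0) (hr : a.val % 11 ≠ 5) : monoP (11*m) 4 (liftC m u) (a, d) := by
  intro i _
  show liftC m u (a + i • d) = liftC m u a
  rw [color_ap hm u a d i, color_self hm u a, hd]
  simp only [Nat.mul_zero, Nat.add_zero]
  rw [Nat.mod_eq_of_lt (show a.val % 11 < 11 by omega), if_neg hr, if_neg hr]

-- Case k = 0, r = 5 : equivalent to monochromaticity downstairs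
lemma case_k0_r5 {m : ℕ} (hm : 0 < m) (u : ZMod m → Fin 2) (a d : ZMod (11*m))
    (hd : d.val % 11 = 0) (hr : a.val % 11 = 5) :
    monoP (11*m) 4 (liftC m u) (a, d) ↔
      monoP m 4 u (((a.val/11 : ℕ) : ZMod m), ((d.val/11 : ℕ) : ZMod m)) := by
  have key : ∀ i : ℕ, liftC m u (a + i • d) = u (((a.val/11 : ℕ) : ZMod m) + i • ((d.val/11 : ℕ) : ZMod m)) := by
    intro i
    rw [color_ap hm u a d i, hd, hr]
    have h5 : (5 + i*0) % 11 = 5 := by omega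
    rw [if_pos (by omega)]
    have harith : a.val/11 + i*(d.val/11) + (5+i*0)/11 = a.val/11 + i*(d.val/11) := by omega
    rw [harith]
    push_cast [nsmul_eq_mul]
    ring
  constructor
  · intro hP i hi
    have := hP i hi
    rw [key i] at this
    rw [this]
    show liftC m u a = _
    rw [color_self hm u a, if_pos hr]
  · intro hP i hi
    rw [key i]
    show _ = liftC m u a
    rw [color_self hm u a, if_pos hr]
    exact hP i hi

instance instNZ11 {m : ℕ} [NeZero m] : NeZero (11*m) :=
  ⟨by have := NeZero.ne m; positivity⟩

lemma card_residue {m : ℕ} [NeZero m] (w : ℕ) (hw : w < 11) :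
    (Finset.univ.filter (fun x : ZMod (11*m) => x.val % 11 = w)).card = m := by
  have hm : 0 < m := Nat.pos_of_ne_zero (NeZero.ne m)
  conv_rhs => rw [← ZMod.card m, ← Finset.card_univ]
  apply Finset.card_nbij' (i := fun x => ((x.val / 11 : ℕ) : ZMod m))
    (j := fun t => ((11*t.val + w : ℕ) : ZMod (11*m)))
  · intro x _; exact Finset.mem_univ _
  · intro t _
    simp only [Finset.coe_filter, Set.mem_setOf_eq, Finset.mem_filter, Finset.mem_univ, true_and]
    rw [val_key hm _ _ hw]
    omega
  · intro x hx
    simp only [Finset.coe_filter, Set.mem_setOf_eq, Finset.mem_filter, Finset.mem_univ, true_and] at hx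
    have h1 : x.val / 11 < m := val_div_lt hm x
    dsimp only
    rw [ZMod.val_natCast, Nat.mod_eq_of_lt h1]
    conv_rhs => rw [decomp hm x]
    rw [hx]
  · intro t _
    show ((((11 * t.val + w : ℕ) : ZMod (11*m)).val / 11 : ℕ) : ZMod m) = t
    rw [val_key hm _ _ hw]
    have : t.val % m = t.val := Nat.mod_eq_of_lt t.val_lt
    rw [this]
    have : (11 * t.val + w) / 11 = t.val := by omega
    rw [this, ZMod.natCast_val, ZMod.cast_id]

lemma count_lift {m : ℕ} [NeZero m] (u : ZMod m → Fin 2) :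
    (Finset.univ.filter (monoP (11*m) 4 (liftC m u))).card
      = 10*m^2 + (Finset.univ.filter (monoP m 4 u)).card := by
  have hm : 0 < m := Nat.pos_of_ne_zero (NeZero.ne m)
  classical
  -- split the filter
  have hsplit : (Finset.univ.filter (monoP (11*m) 4 (liftC m u)))
      = (Finset.univ.filter (fun p : ZMod (11*m) × ZMod (11*m) =>
          (p.1.val % 11 ≠ 5) ∧ (p.2.val % 11 = 0)))
        ∪ (Finset.univ.filter (fun p : ZMod (11*m) × ZMod (11*m) =>
          (p.1.val % 11 = 5) ∧ (p.2.val % 11 = 0) ∧ monoP (11*m) 4 (liftC m u) p)) := by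
    ext p
    simp only [Finset.mem_filter, Finset.mem_univ, true_and, Finset.mem_union]
    constructor
    · intro hP
      have hd : p.2.val % 11 = 0 := by
        by_contra hd
        exact case_kne hm u p.1 p.2 hd hP
      by_cases hr : p.1.val % 11 = 5
      · exact Or.inr ⟨hr, hd, hP⟩
      · exact Or.inl ⟨hr, hd⟩
    · rintro (⟨hr, hd⟩ | ⟨_, _, hP⟩)
      · exact case_k0_rne hm u p.1 p.2 hd hr
      · exact hP
  rw [hsplit, Finset.card_union_of_disjoint]
  · congr 1
    · -- first part : 10 m^2
      rw [← Finset.univ_product_univ,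
        Finset.filter_product (fun a : ZMod (11*m) => a.val % 11 ≠ 5)
          (fun b : ZMod (11*m) => b.val % 11 = 0), Finset.card_product]
      have h2 : (Finset.univ.filter (fun x : ZMod (11*m) => x.val % 11 = 0)).card = m :=
        card_residue 0 (by norm_num)
      have h1 : (Finset.univ.filter (fun x : ZMod (11*m) => x.val % 11 ≠ 5)).card = 10*m := by
        have := Finset.card_filter_add_card_filter_not
          (s := (Finset.univ : Finset (ZMod (11*m)))) (p := fun x => x.val % 11 = 5)
        have h5 : (Finset.univ.filter (fun x : ZMod (11*m) => x.val % 11 = 5)).card = m :=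
          card_residue 5 (by norm_num)
        have hcard : (Finset.univ : Finset (ZMod (11*m))).card = 11*m := by
          rw [Finset.card_univ, ZMod.card]
        simp only [ne_eq]
        omega
      rw [h1, h2]; ring
    · -- second part : bijection with level m
      apply Finset.card_nbij'
        (i := fun p => (((p.1.val / 11 : ℕ) : ZMod m), ((p.2.val / 11 : ℕ) : ZMod m)))
        (j := fun q => (((11*q.1.val + 5 : ℕ) : ZMod (11*m)), ((11*q.2.val + 0 : ℕ) : ZMod (11*m))))
      · intro p hp
        simp only [Finset.coe_filter, Set.mem_setOf_eq, Finset.mem_filter, Finset.mem_univ, true_and] at hp ⊢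
        exact (case_k0_r5 hm u p.1 p.2 hp.2.1 hp.1).mp hp.2.2
      · intro q hq
        simp only [Finset.coe_filter, Set.mem_setOf_eq, Finset.mem_filter, Finset.mem_univ, true_and] at hq ⊢
        have ha : (((11*q.1.val + 5 : ℕ) : ZMod (11*m))).val % 11 = 5 := by
          rw [val_key hm _ _ (by norm_num)]; omega
        have hd : (((11*q.2.val + 0 : ℕ) : ZMod (11*m))).val % 11 = 0 := by
          rw [val_key hm _ _ (by norm_num)]; omega
        refine ⟨ha, hd, ?_⟩
        rw [case_k0_r5 hm u _ _ hd ha]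
        have e1 : (((11*q.1.val + 5 : ℕ) : ZMod (11*m))).val / 11 = q.1.val := by
          rw [val_key hm _ _ (by norm_num), Nat.mod_eq_of_lt q.1.val_lt]; omega
        have e2 : (((11*q.2.val + 0 : ℕ) : ZMod (11*m))).val / 11 = q.2.val := by
          rw [val_key hm _ _ (by norm_num), Nat.mod_eq_of_lt q.2.val_lt]; omega
        rw [e1, e2, ZMod.natCast_val, ZMod.cast_id, ZMod.natCast_val, ZMod.cast_id]
        exact hq
      · intro p hp
        simp only [Finset.coe_filter, Set.mem_setOf_eq, Finset.mem_filter, Finset.mem_univ, true_and] at hp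
        dsimp only
        obtain ⟨hr, hd, _⟩ := hp
        have h1 : (p.1.val / 11) % m = p.1.val / 11 := Nat.mod_eq_of_lt (val_div_lt hm p.1)
        have h2 : (p.2.val / 11) % m = p.2.val / 11 := Nat.mod_eq_of_lt (val_div_lt hm p.2)
        have : p = (p.1, p.2) := rfl
        rw [this]
        congr 1
        · rw [ZMod.val_natCast, h1]
          conv_rhs => rw [decomp hm p.1]
          rw [hr]
        · rw [ZMod.val_natCast, h2]
          conv_rhs => rw [decomp hm p.2]
          rw [hd]
      · intro q hq
        dsimp only
        have e1 : (((11*q.1.val + 5 : ℕ) : ZMod (11*m))).val / 11 = q.1.val := by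
          rw [val_key hm _ _ (by norm_num), Nat.mod_eq_of_lt q.1.val_lt]; omega
        have e2 : (((11*q.2.val + 0 : ℕ) : ZMod (11*m))).val / 11 = q.2.val := by
          rw [val_key hm _ _ (by norm_num), Nat.mod_eq_of_lt q.2.val_lt]; omega
        have : q = (q.1, q.2) := rfl
        rw [this]
        congr 1
        · rw [e1, ZMod.natCast_val, ZMod.cast_id]
        · rw [e2, ZMod.natCast_val, ZMod.cast_id]
  · -- disjointness
    rw [Finset.disjoint_filter]
    rintro p _ ⟨hr, _⟩ ⟨hr5, _⟩
    exact hr hr5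

lemma seq_exists : ∀ (j n : ℕ) [NeZero n], n = 11^j → ∃ c : ZMod n → Fin 2,
    12 * (Finset.univ.filter (monoP n 4 c)).card = n^2 + 11 := by
  intro j
  induction j with
  | zero =>
    intro n _ hn
    subst hn
    refine ⟨fun _ => 0, ?_⟩
    have hall : ∀ p : ZMod (11^0) × ZMod (11^0), monoP (11^0) 4 (fun _ => (0 : Fin 2)) p := by
      intro p i _; rfl
    rw [Finset.filter_true_of_mem (fun p _ => hall p), Finset.card_univ, Fintype.card_prod,
      ZMod.card, pow_zero]
    norm_num
  | succ j ih =>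
    intro n _ hn
    have hNZ : NeZero (11^j) := ⟨pow_ne_zero _ (by norm_num)⟩
    obtain ⟨c, hc⟩ := ih (11^j) rfl
    have hn' : n = 11 * 11^j := by rw [hn, pow_succ']
    subst hn'
    refine ⟨liftC (11^j) c, ?_⟩
    rw [show (Finset.univ.filter (monoP (11*11^j) 4 (liftC (11^j) c))).card
        = 10*(11^j)^2 + (Finset.univ.filter (monoP (11^j) 4 c)).card from count_lift c]
    have hsq : (11 * 11^j)^2 = 121 * (11^j)^2 := by ring
    omega

lemma monoAPCount_eq_card {n : ℕ} [NeZero n] (c : ZMod n → Fin 2) :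
    monoAPCount n 4 c = (Finset.univ.filter (monoP n 4 c)).card := by
  classical
  rw [monoAPCount]
  have hset : {p : ZMod n × ZMod n | ∀ i < 4, c (p.1 + i • p.2) = c p.1}
      = ↑(Finset.univ.filter (monoP n 4 c)) := by
    ext p
    simp only [Set.mem_setOf_eq, Finset.coe_filter, Finset.mem_univ, true_and]
    rfl
  rw [hset, Set.ncard_coe_finset]

theorem liminf_m4_le_one_twelfth :
    ∀ ε : ℝ, 0 < ε → ∀ M : ℕ, ∃ n : ℕ, M ≤ n ∧
      ∃ c : ZMod n → Fin 2, (monoAPCount n 4 c : ℝ) ≤ (1 / 12 + ε) * (n : ℝ) ^ 2 := by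
  intro ε hε M
  obtain ⟨K, hK⟩ := exists_nat_ge (11/(12*ε))
  set k := max M K + 1 with hk
  have hkpow : k ≤ 11^k := le_of_lt ((Nat.lt_pow_self (n := k) (by norm_num : 1 < 11)))
  have hNZ : NeZero (11^k) := ⟨pow_ne_zero _ (by norm_num)⟩
  refine ⟨11^k, le_trans (le_trans (le_max_left M K) (by omega)) hkpow, ?_⟩
  obtain ⟨c, hc⟩ := seq_exists k (11^k) rfl
  refine ⟨c, ?_⟩
  rw [monoAPCount_eq_card]
  have hcR : 12 * ((Finset.univ.filter (monoP (11^k) 4 c)).card : ℝ)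
      = ((11^k : ℕ) : ℝ)^2 + 11 := by
    have := congrArg (Nat.cast : ℕ → ℝ) hc
    push_cast at this ⊢
    linarith
  have hn1 : (1:ℝ) ≤ ((11^k : ℕ) : ℝ) := by
    exact_mod_cast Nat.one_le_iff_ne_zero.mpr (pow_ne_zero _ (by norm_num))
  have hnK : (K : ℝ) ≤ ((11^k : ℕ) : ℝ) := by
    exact_mod_cast le_trans (le_trans (le_max_right M K) (by omega)) hkpow
  have h11 : (11:ℝ) ≤ 12 * ε * ((11^k : ℕ) : ℝ) := by
    have h1 : 11/(12*ε) ≤ ((11^k : ℕ) : ℝ) := le_trans hK hnK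
    have h2 : (0:ℝ) < 12*ε := by linarith
    calc (11:ℝ) = (11/(12*ε)) * (12*ε) := by field_simp
      _ ≤ ((11^k : ℕ) : ℝ) * (12*ε) := by
          apply mul_le_mul_of_nonneg_right h1 (le_of_lt h2)
      _ = 12 * ε * ((11^k : ℕ) : ℝ) := by ring
  nlinarith [sq_nonneg (((11^k : ℕ) : ℝ)), hn1, hε]
end

section
/- For every ε > 0 and every M there exists an integer n ≥ M and a 2-coloring c of Z_n such that M_5(n,c) ≤ (1/38 + ε)·n². (Equivalently, the lower limit as n → ∞ of min_c M_5(n,c)/n² is at most 1/38.) -/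
def pat : List (Fin 2) :=
[0,0,0,0,1,0,0,0,0,1,0,0,0,0,1,1,1,0,1,0,0,0,1,1,1,1,0,1,1,1,1,0,1,1,1,1,0,0,0,1,0,1,1,1]

def c44 : ZMod 44 → Fin 2 := fun x => pat.getD x.val 0

lemma c44_card : (Finset.univ.filter
    (fun p : ZMod 44 × ZMod 44 => ∀ i < 5, c44 (p.1 + i • p.2) = c44 p.1)).card = 44 := by
  decide

section generic
set_option linter.unusedSectionVars false
variable {G H : Type*} [AddCommGroup G] [AddCommGroup H] [Fintype G] [Fintype H]
  [DecidableEq G] [DecidableEq H]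

lemma fiber_card (φ : G →+ H) (y z : H) (x0 : G) (hx0 : φ x0 = y - z) :
    (Finset.univ.filter (fun x => φ x = y)).card
      = (Finset.univ.filter (fun x => φ x = z)).card := by
  apply Finset.card_bij (fun x _ => x - x0)
  · intro a ha
    simp only [Finset.mem_filter, Finset.mem_univ, true_and] at ha ⊢
    rw [map_sub, ha, hx0]; abel
  · intro a ha b hb hab
    exact sub_left_injective hab
  · intro b hb
    simp only [Finset.mem_filter, Finset.mem_univ, true_and] at hb ⊢
    exact ⟨b + x0, by rw [map_add, hb, hx0]; abel, by abel⟩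

lemma preimage_card (φ : G →+ H) (hs : Function.Surjective φ) (P : H → Prop)
    [DecidablePred P] :
    (Finset.univ.filter (fun x => P (φ x))).card
      = (Finset.univ.filter P).card * (Finset.univ.filter (fun x => φ x = 0)).card := by
  classical
  rw [Finset.card_eq_sum_card_fiberwise
    (f := φ) (t := Finset.univ.filter P)
    (fun x hx => by simpa using (Finset.mem_filter.mp hx).2)]
  rw [Finset.sum_congr rfl (fun y hy => ?_), Finset.sum_const, smul_eq_mul]
  have hyP : P y := (Finset.mem_filter.mp hy).2
  have : Finset.filter (fun x => φ x = y) (Finset.univ.filter (fun x => P (φ x)))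
      = Finset.univ.filter (fun x => φ x = y) := by
    ext x
    simp only [Finset.mem_filter, Finset.mem_univ, true_and]
    constructor
    · rintro ⟨_, h⟩; exact h
    · intro h; exact ⟨h ▸ hyP, h⟩
  rw [this]
  obtain ⟨x0, hx0⟩ := hs y
  exact fiber_card φ y 0 x0 (by rw [hx0, sub_zero])

end generic

lemma castHom_surj (q m : ℕ) [NeZero q] [NeZero m] :
    Function.Surjective (ZMod.castHom (dvd_mul_right q m) (ZMod q)) := by
  intro y
  refine ⟨(y.val : ZMod (q * m)), ?_⟩
  rw [map_natCast]
  exact ZMod.natCast_rightInverse y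

lemma monoAPCount_eq_filter (n k : ℕ) [NeZero n] (c : ZMod n → Fin 2) :
    monoAPCount n k c
      = (Finset.univ.filter (fun p : ZMod n × ZMod n => ∀ i < k, c (p.1 + i • p.2) = c p.1)).card := by
  classical
  rw [monoAPCount, Set.ncard_eq_toFinset_card']
  congr 1
  ext p
  simp

lemma lift_count (q m : ℕ) [NeZero q] [NeZero m] (c0 : ZMod q → Fin 2) :
    monoAPCount (q * m) 5 (fun x => c0 (ZMod.castHom (dvd_mul_right q m) (ZMod q) x))
      = monoAPCount q 5 c0 * m ^ 2 := by
  classical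
  haveI : NeZero (q * m) := ⟨mul_ne_zero (NeZero.ne q) (NeZero.ne m)⟩
  set f := ZMod.castHom (dvd_mul_right q m) (ZMod q) with hf
  set φ : (ZMod (q * m) × ZMod (q * m)) →+ (ZMod q × ZMod q) :=
    AddMonoidHom.prodMap f.toAddMonoidHom f.toAddMonoidHom with hφ
  have hsurj : Function.Surjective φ := by
    rintro ⟨y1, y2⟩
    obtain ⟨x1, h1⟩ := castHom_surj q m y1
    obtain ⟨x2, h2⟩ := castHom_surj q m y2
    exact ⟨(x1, x2), Prod.ext h1 h2⟩
  set P : ZMod q × ZMod q → Prop := fun y => ∀ i < 5, c0 (y.1 + i • y.2) = c0 y.1 with hP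
  rw [monoAPCount_eq_filter, monoAPCount_eq_filter]
  have hfilt : (Finset.univ.filter
      (fun p : ZMod (q * m) × ZMod (q * m) => ∀ i < 5, c0 (f (p.1 + i • p.2)) = c0 (f p.1)))
      = Finset.univ.filter (fun p => P (φ p)) := by
    apply Finset.filter_congr
    intro p _
    have hφp : φ p = (f p.1, f p.2) := rfl
    simp only [hP, hφp, map_add, map_nsmul]
  rw [hfilt, preimage_card φ hsurj P]
  congr 1
  -- kernel cardinality = m ^ 2
  have hker : (Finset.univ.filter (fun x : ZMod (q * m) × ZMod (q * m) => φ x = 0)).card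
      = m ^ 2 := by
    have htotal := preimage_card φ hsurj (fun _ => True)
    simp only [Finset.filter_true] at htotal
    have hcard : Fintype.card (ZMod (q * m) × ZMod (q * m))
        = Fintype.card (ZMod q × ZMod q)
          * (Finset.univ.filter (fun x : ZMod (q * m) × ZMod (q * m) => φ x = 0)).card := by
      simpa [Finset.card_univ] using htotal
    have h1 : Fintype.card (ZMod (q * m) × ZMod (q * m)) = (q * m) ^ 2 := by
      simp [ZMod.card, sq]
    have h2 : Fintype.card (ZMod q × ZMod q) = q ^ 2 := by
      simp [ZMod.card, sq]
    rw [h1, h2] at hcard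
    have hq : 0 < q ^ 2 := pow_pos (Nat.pos_of_ne_zero (NeZero.ne q)) 2
    apply Nat.eq_of_mul_eq_mul_left hq
    rw [← hcard, mul_pow]
  rw [hker]

theorem liminf_m5_le_one_over_38 :
    ∀ ε : ℝ, 0 < ε → ∀ M : ℕ, ∃ n : ℕ, M ≤ n ∧
      ∃ c : ZMod n → Fin 2, (monoAPCount n 5 c : ℝ) ≤ (1 / 38 + ε) * (n : ℝ) ^ 2 := by
  intro ε hε M
  refine ⟨44 * (M + 1), ?_, ?_⟩
  · nlinarith [Nat.le_refl M]
  haveI : NeZero (M + 1) := ⟨Nat.succ_ne_zero M⟩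
  refine ⟨fun x => c44 (ZMod.castHom (dvd_mul_right 44 (M + 1)) (ZMod 44) x), ?_⟩
  rw [lift_count 44 (M + 1) c44]
  have hbase : monoAPCount 44 5 c44 = 44 := by
    rw [monoAPCount_eq_filter]; exact c44_card
  rw [hbase]
  have hm : (0:ℝ) < ((M:ℝ) + 1) := by positivity
  push_cast
  have : ((M:ℝ) + 1) ^ 2 > 0 := by positivity
  nlinarith [sq_nonneg ((M:ℝ)+1), mul_pos hε this]
end

section
/- For every integer k ≥ 3, every positive integer b, and every ε > 0, there exists N such that for every n ≥ N there is a 2-coloring c of [n] for which the number of monochromatic k-APs in [n] under c is at most (m_k(Z_b) + ε) times the total number of k-APs in [n], where m_k(Z_b) = (min over 2-colorings B of Z_b of M_k(b,B))/b². -/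
/-- The minimum of `monoAPCount n k c` over all 2-colorings `c` of `Z_n`. -/
noncomputable def minMonoAPCount (n k : ℕ) : ℕ :=
  sInf {m : ℕ | ∃ c : ZMod n → Fin 2, monoAPCount n k c = m}

/-- Number of `k`-APs in `[n] = {1,…,n}`: pairs `(a,d)` of integers with
`1 ≤ a ≤ n` and `1 ≤ a+(k-1)d ≤ n`. -/
noncomputable def intervalAPCount (n k : ℕ) : ℕ :=
  Set.ncard {p : ℤ × ℤ | 1 ≤ p.1 ∧ p.1 ≤ n ∧
    1 ≤ p.1 + ((k : ℤ) - 1) * p.2 ∧ p.1 + ((k : ℤ) - 1) * p.2 ≤ n}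

/-- Number of monochromatic `k`-APs in `[n]` under the 2-coloring `c`. -/
noncomputable def intervalMonoAPCount (n k : ℕ) (c : ℤ → Fin 2) : ℕ :=
  Set.ncard {p : ℤ × ℤ | 1 ≤ p.1 ∧ p.1 ≤ n ∧
    1 ≤ p.1 + ((k : ℤ) - 1) * p.2 ∧ p.1 + ((k : ℤ) - 1) * p.2 ≤ n ∧
    ∀ i < k, c (p.1 + (i : ℤ) * p.2) = c p.1}

open Finset

/-- The finset of k-APs in [n]. -/
noncomputable def apFinset (n k : ℕ) : Finset (ℤ × ℤ) :=
  (Finset.Icc (1:ℤ) n ×ˢ Finset.Icc (-(n:ℤ)) n).filter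
    (fun p => 1 ≤ p.1 + ((k : ℤ) - 1) * p.2 ∧ p.1 + ((k : ℤ) - 1) * p.2 ≤ n)

lemma mem_apFinset {n k : ℕ} (hk : 3 ≤ k) (p : ℤ × ℤ) :
    p ∈ apFinset n k ↔ (1 ≤ p.1 ∧ p.1 ≤ n ∧
      1 ≤ p.1 + ((k : ℤ) - 1) * p.2 ∧ p.1 + ((k : ℤ) - 1) * p.2 ≤ n) := by
  have hm : (2:ℤ) ≤ (k:ℤ) - 1 := by
    have : (3:ℤ) ≤ (k:ℤ) := by exact_mod_cast hk
    omega
  constructor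
  · intro h
    simp only [apFinset, mem_filter, mem_product, mem_Icc] at h
    exact ⟨h.1.1.1, h.1.1.2, h.2.1, h.2.2⟩
  · rintro ⟨h1, h2, h3, h4⟩
    simp only [apFinset, mem_filter, mem_product, mem_Icc]
    refine ⟨⟨⟨h1, h2⟩, ?_, ?_⟩, h3, h4⟩
    · by_contra hc
      push_neg at hc
      have hd : p.2 ≤ -(n:ℤ) - 1 := by omega
      have hn : (1:ℤ) ≤ n := by omega
      nlinarith [mul_le_mul_of_nonneg_left hd (by omega : (0:ℤ) ≤ (k:ℤ) - 1)]
    · by_contra hc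
      push_neg at hc
      have hd : (n:ℤ) + 1 ≤ p.2 := by omega
      have hn : (1:ℤ) ≤ n := by omega
      nlinarith [mul_le_mul_of_nonneg_left hd (by omega : (0:ℤ) ≤ (k:ℤ) - 1)]

lemma intervalAPCount_eq (n k : ℕ) (hk : 3 ≤ k) :
    intervalAPCount n k = (apFinset n k).card := by
  rw [intervalAPCount]
  rw [show {p : ℤ × ℤ | 1 ≤ p.1 ∧ p.1 ≤ n ∧
      1 ≤ p.1 + ((k : ℤ) - 1) * p.2 ∧ p.1 + ((k : ℤ) - 1) * p.2 ≤ n}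
      = (↑(apFinset n k) : Set (ℤ × ℤ)) from by
    ext p; simp [mem_apFinset hk]]
  exact Set.ncard_coe_finset _

lemma intervalMonoAPCount_eq (n k : ℕ) (hk : 3 ≤ k) (c : ℤ → Fin 2) :
    intervalMonoAPCount n k c =
      ((apFinset n k).filter (fun p => ∀ i < k, c (p.1 + (i : ℤ) * p.2) = c p.1)).card := by
  rw [intervalMonoAPCount]
  rw [show {p : ℤ × ℤ | 1 ≤ p.1 ∧ p.1 ≤ n ∧
      1 ≤ p.1 + ((k : ℤ) - 1) * p.2 ∧ p.1 + ((k : ℤ) - 1) * p.2 ≤ n ∧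
      ∀ i < k, c (p.1 + (i : ℤ) * p.2) = c p.1}
      = (↑((apFinset n k).filter (fun p => ∀ i < k, c (p.1 + (i : ℤ) * p.2) = c p.1)) : Set (ℤ × ℤ)) from by
    ext p
    simp only [Set.mem_setOf_eq, Finset.coe_filter, mem_apFinset hk, Set.mem_setOf_eq]
    tauto]
  exact Set.ncard_coe_finset _

/-- Lower bound on the number of APs. -/
lemma apFinset_card_lb (n k : ℕ) (hk : 3 ≤ k) :
    (n : ℤ) * ((n:ℤ) / ((k:ℤ) - 1)) ≤ ((apFinset n k).card : ℤ) := by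
  set m : ℤ := (k:ℤ) - 1 with hmdef
  have hm : (2:ℤ) ≤ m := by
    have : (3:ℤ) ≤ (k:ℤ) := by exact_mod_cast hk
    omega
  have hm0 : (0:ℤ) < m := by omega
  set q : ℤ := (n:ℤ) / m with hq
  have hqn : 0 ≤ q := Int.ediv_nonneg (by positivity) (by omega)
  have hmq : m * q ≤ n := by
    have := Int.ediv_mul_le (n:ℤ) hm0.ne'
    linarith [this, mul_comm m q]
  have key : ((Finset.Icc (1:ℤ) n ×ˢ Finset.Icc (0:ℤ) (q-1)).card : ℤ)
      ≤ ((apFinset n k).card : ℤ) := by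
    have := Finset.card_le_card_of_injOn
      (f := fun p : ℤ × ℤ => (p.1, p.2 - (p.1 - 1) / m))
      (s := Finset.Icc (1:ℤ) n ×ˢ Finset.Icc (0:ℤ) (q-1)) (t := apFinset n k)
      ?_ ?_
    · exact_mod_cast this
    · rintro ⟨a, t⟩ hp
      simp only [coe_product, Set.mem_prod, coe_Icc, Set.mem_Icc, mem_coe, mem_product, mem_Icc] at hp
      obtain ⟨⟨ha1, ha2⟩, ht1, ht2⟩ := hp
      have hmod1 : 0 ≤ (a-1) % m := Int.emod_nonneg _ hm0.ne'
      have hmod2 : (a-1) % m < m := Int.emod_lt_of_pos _ hm0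
      have hde : a - 1 = m * ((a-1)/m) + (a-1) % m := (Int.mul_ediv_add_emod _ _).symm
      rw [mem_coe, mem_apFinset hk]
      constructor
      · exact ha1
      refine ⟨ha2, ?_, ?_⟩
      · simp only
        rw [← hmdef]
        nlinarith
      · simp only
        rw [← hmdef]
        nlinarith
    · rintro ⟨a, t⟩ hp ⟨a', t'⟩ hp' h
      simp only [Prod.mk.injEq] at h
      obtain ⟨h1, h2⟩ := h
      subst h1
      have : t = t' := by omega
      simp [this]
  refine le_trans ?_ key
  rw [Finset.card_product, Int.card_Icc, Int.card_Icc]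
  have h1 : (((n:ℤ) + 1 - 1).toNat : ℤ) = n := by omega
  have h2 : ((q - 1 + 1 - 0).toNat : ℤ) = q := by omega
  rw [Nat.cast_mul, h1, h2]

/-- Upper bound on fibers. -/
lemma fiber_card_ub (n k b : ℕ) (hk : 3 ≤ k) (hb : 0 < b) [NeZero b] (r : ZMod b × ZMod b) :
    (((apFinset n k).filter
        (fun p => ((p.1 : ZMod b), (p.2 : ZMod b)) = r)).card : ℤ)
      ≤ (((n:ℤ) - 1) / b + 1) * ((((n:ℤ) - 1) / ((k:ℤ)-1)) / b + 1) := by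
  set m : ℤ := (k:ℤ) - 1 with hmdef
  have hm : (2:ℤ) ≤ m := by
    have : (3:ℤ) ≤ (k:ℤ) := by exact_mod_cast hk
    omega
  have hm0 : (0:ℤ) < m := by omega
  have hb0 : (0:ℤ) < (b:ℤ) := by exact_mod_cast hb
  set qa : ℤ := ((n:ℤ) - 1) / b with hqa
  set qd : ℤ := (((n:ℤ) - 1) / m) / b with hqd
  have key := Finset.card_le_card_of_injOn
    (f := fun p : ℤ × ℤ => ((p.1 - 1) / b, (p.2 + (p.1 - 1) / m) / b))
    (s := (apFinset n k).filter (fun p => ((p.1 : ZMod b), (p.2 : ZMod b)) = r))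
    (t := Finset.Icc (0:ℤ) qa ×ˢ Finset.Icc (0:ℤ) qd) ?_ ?_
  · have key' : (((apFinset n k).filter
        (fun p => ((p.1 : ZMod b), (p.2 : ZMod b)) = r)).card : ℤ)
        ≤ ((Finset.Icc (0:ℤ) qa ×ˢ Finset.Icc (0:ℤ) qd).card : ℤ) := by
      exact_mod_cast key
    refine le_trans key' ?_
    rw [Finset.card_product, Int.card_Icc, Int.card_Icc]
    have hqa0 : -1 ≤ qa := by
      rw [hqa, Int.le_ediv_iff_mul_le hb0]; omega
    have hd0 : -1 ≤ ((n:ℤ) - 1) / m := by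
      rw [Int.le_ediv_iff_mul_le hm0]; omega
    have hqd0 : -1 ≤ qd := by
      rw [hqd, Int.le_ediv_iff_mul_le hb0]; omega
    have e1 : ((qa + 1 - 0).toNat : ℤ) = qa + 1 := by omega
    have e2 : ((qd + 1 - 0).toNat : ℤ) = qd + 1 := by omega
    rw [Nat.cast_mul, e1, e2]
  · rintro ⟨a, d⟩ hp
    simp only [mem_coe, mem_filter] at hp
    rw [mem_apFinset hk] at hp
    obtain ⟨⟨ha1, ha2, hd1, hd2⟩, _⟩ := hp
    simp only at ha1 ha2 hd1 hd2
    rw [← hmdef] at hd1 hd2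
    simp only [coe_product, Set.mem_prod, coe_Icc, Set.mem_Icc, mem_coe, mem_product, mem_Icc]
    have hmod1 : 0 ≤ (a-1) % m := Int.emod_nonneg _ hm0.ne'
    have hmod2 : (a-1) % m < m := Int.emod_lt_of_pos _ hm0
    have hde : a - 1 = m * ((a-1)/m) + (a-1) % m := (Int.mul_ediv_add_emod _ _).symm
    refine ⟨⟨Int.ediv_nonneg (by omega) (by omega), ?_⟩,
      Int.ediv_nonneg ?_ (by omega), ?_⟩
    · exact Int.ediv_le_ediv hb0 (by omega)
    · -- 0 ≤ d + (a-1)/m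
      nlinarith
    · -- (d + (a-1)/m)/b ≤ qd
      have h1 : d + (a-1)/m ≤ ((n:ℤ) - 1) / m := by
        rw [Int.le_ediv_iff_mul_le hm0]
        nlinarith
      exact Int.ediv_le_ediv hb0 h1
  · rintro ⟨a, d⟩ hp ⟨a', d'⟩ hp' h
    simp only [Finset.mem_coe, mem_filter] at hp hp'
    simp only [Prod.mk.injEq] at h
    obtain ⟨h1, h2⟩ := h
    obtain ⟨ha, hd⟩ := Prod.ext_iff.mp (hp.2.trans hp'.2.symm)
    have hma : a % b = a' % b := (ZMod.intCast_eq_intCast_iff a a' b).mp ha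
    have hmd : d % b = d' % b := (ZMod.intCast_eq_intCast_iff d d' b).mp hd
    have hma1 : (a-1) % b = (a'-1) % b := Int.ModEq.sub_right 1 hma
    have haa : a = a' := by
      have : a - 1 = a' - 1 := by
        calc a - 1 = (b:ℤ) * ((a-1)/b) + (a-1)%b := (Int.mul_ediv_add_emod _ _).symm
          _ = (b:ℤ) * ((a'-1)/b) + (a'-1)%b := by rw [h1, hma1]
          _ = a' - 1 := Int.mul_ediv_add_emod _ _
      omega
    subst haa
    have hmd1 : (d + (a-1)/m) % b = (d' + (a-1)/m) % b :=
      Int.ModEq.add_right _ hmd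
    have hdd : d = d' := by
      have : d + (a-1)/m = d' + (a-1)/m := by
        calc d + (a-1)/m = (b:ℤ) * ((d + (a-1)/m)/b) + (d + (a-1)/m)%b :=
            (Int.mul_ediv_add_emod _ _).symm
          _ = (b:ℤ) * ((d' + (a-1)/m)/b) + (d' + (a-1)/m)%b := by rw [h2, hmd1]
          _ = d' + (a-1)/m := Int.mul_ediv_add_emod _ _
      omega
    simp [hdd]

set_option maxHeartbeats 2000000 in
theorem interval_upper_bound_from_cyclic :
    ∀ k : ℕ, 3 ≤ k → ∀ b : ℕ, 0 < b → ∀ ε : ℝ, 0 < ε → ∃ N : ℕ, ∀ n : ℕ, N ≤ n →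
      ∃ c : ℤ → Fin 2,
        (intervalMonoAPCount n k c : ℝ) ≤
          ((minMonoAPCount b k : ℝ) / (b : ℝ) ^ 2 + ε) * (intervalAPCount n k : ℝ) := by
  intro k hk b hb ε hε
  haveI : NeZero b := ⟨hb.ne'⟩
  -- the optimal coloring of ZMod b
  obtain ⟨B, hB⟩ : ∃ B : ZMod b → Fin 2, monoAPCount b k B = minMonoAPCount b k := by
    have hne : {m : ℕ | ∃ c : ZMod b → Fin 2, monoAPCount b k c = m}.Nonempty :=
      ⟨monoAPCount b k (fun _ => 0), ⟨_, rfl⟩⟩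
    exact Nat.sInf_mem hne
  set Rf : Finset (ZMod b × ZMod b) :=
    Finset.univ.filter (fun r => ∀ i < k, B (r.1 + i • r.2) = B r.1) with hRf
  have hRfcard : Rf.card = minMonoAPCount b k := by
    rw [← hB, monoAPCount]
    rw [show {p : ZMod b × ZMod b | ∀ i < k, B (p.1 + i • p.2) = B p.1}
        = (↑Rf : Set (ZMod b × ZMod b)) from by ext p; simp [hRf]]
    exact (Set.ncard_coe_finset _).symm
  have hMb : Rf.card ≤ b * b := by
    calc Rf.card ≤ (Finset.univ : Finset (ZMod b × ZMod b)).card := card_le_card (filter_subset _ _)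
      _ = b * b := by simp [ZMod.card]
  -- the periodic coloring of ℤ
  set c : ℤ → Fin 2 := fun x => B (x : ZMod b) with hc
  -- abbreviations
  set m : ℤ := (k:ℤ) - 1 with hmdef
  have hm : (2:ℤ) ≤ m := by
    have : (3:ℤ) ≤ (k:ℤ) := by exact_mod_cast hk
    omega
  have hm0 : (0:ℤ) < m := by omega
  have hb0 : (0:ℤ) < (b:ℤ) := by exact_mod_cast hb
  -- choose N
  set K : ℝ := (b:ℝ) + 2*(m:ℝ)*(b:ℝ) + (m:ℝ) with hK
  obtain ⟨N, hN⟩ := exists_nat_ge ((m:ℝ) + K/ε + (b:ℝ) + (k:ℝ) + 1)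
  refine ⟨N, fun n hn => ⟨c, ?_⟩⟩
  have hxN : ((m:ℝ) + K/ε + (b:ℝ) + (k:ℝ) + 1) ≤ (n:ℝ) := by
    refine hN.trans ?_; exact_mod_cast hn
  have hKpos : 0 < K := by
    have : (0:ℝ) < (m:ℝ) := by exact_mod_cast hm0
    have : (0:ℝ) < (b:ℝ) := by exact_mod_cast hb0
    positivity
  have hn1 : 1 ≤ n := by
    by_contra h
    push_neg at h
    interval_cases n
    simp only [Nat.cast_zero] at hxN
    linarith [div_pos hKpos hε, (by exact_mod_cast hm0 : (0:ℝ) < (m:ℝ)),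
      (by exact_mod_cast hb0 : (0:ℝ) < (b:ℝ)), (by positivity : (0:ℝ) ≤ (k:ℝ))]
  -- integer quantities
  set qa : ℤ := ((n:ℤ) - 1) / b with hqa
  set D : ℤ := ((n:ℤ) - 1) / m with hD
  set qd : ℤ := D / b with hqd
  set q : ℤ := (n:ℤ) / m with hq
  have hn1' : (1:ℤ) ≤ (n:ℤ) := by exact_mod_cast hn1
  have hqa0 : 0 ≤ qa := Int.ediv_nonneg (by omega) (by omega)
  have hD0 : 0 ≤ D := Int.ediv_nonneg (by omega) (by omega)
  have hqd0 : 0 ≤ qd := Int.ediv_nonneg hD0 (by omega)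
  have hq0 : 0 ≤ q := Int.ediv_nonneg (by omega) (by omega)
  -- counts
  set T : ℕ := (apFinset n k).card with hT
  set Mo : ℕ := ((apFinset n k).filter
    (fun p => ∀ i < k, c (p.1 + (i : ℤ) * p.2) = c p.1)).card with hMo
  -- lower bound on T
  have hTlb : (n:ℤ) * q ≤ (T:ℤ) := apFinset_card_lb n k hk
  have hqm : q * m ≥ (n:ℤ) - m + 1 := by
    have := Int.lt_ediv_add_one_mul_self (n:ℤ) hm0
    rw [← hq] at this
    nlinarith
  have hTlb2 : (n:ℤ) * ((n:ℤ) - m + 1) ≤ (T:ℤ) * m := by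
    nlinarith
  -- upper bound on Mo
  have hMoub : (Mo:ℤ) ≤ (Rf.card : ℤ) * ((qa + 1) * (qd + 1)) := by
    have hsub : (apFinset n k).filter
        (fun p => ∀ i < k, c (p.1 + (i : ℤ) * p.2) = c p.1)
        ⊆ Rf.biUnion (fun r => (apFinset n k).filter
            (fun p => ((p.1 : ZMod b), (p.2 : ZMod b)) = r)) := by
      intro p hp
      rw [mem_filter] at hp
      rw [mem_biUnion]
      refine ⟨((p.1 : ZMod b), (p.2 : ZMod b)), ?_, mem_filter.mpr ⟨hp.1, rfl⟩⟩
      rw [hRf, mem_filter]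
      refine ⟨mem_univ _, fun i hi => ?_⟩
      have := hp.2 i hi
      rw [hc] at this
      simp only at this
      rw [← this]
      congr 1
      push_cast [nsmul_eq_mul]
      ring
    have h1 : Mo ≤ ∑ r ∈ Rf, ((apFinset n k).filter
        (fun p => ((p.1 : ZMod b), (p.2 : ZMod b)) = r)).card :=
      (card_le_card hsub).trans card_biUnion_le
    have h2 : ((∑ r ∈ Rf, ((apFinset n k).filter
        (fun p => ((p.1 : ZMod b), (p.2 : ZMod b)) = r)).card : ℕ) : ℤ)
        ≤ ∑ r ∈ Rf, ((qa + 1) * (qd + 1)) := by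
      push_cast
      exact Finset.sum_le_sum (fun r _ => fiber_card_ub n k b hk hb r)
    calc (Mo:ℤ) ≤ _ := by exact_mod_cast h1
      _ ≤ ∑ r ∈ Rf, ((qa + 1) * (qd + 1)) := h2
      _ = (Rf.card : ℤ) * ((qa + 1) * (qd + 1)) := by
          rw [Finset.sum_const, nsmul_eq_mul]
  -- integer facts about the quotients
  have hqab : qa * b ≤ (n:ℤ) - 1 := by
    have := Int.ediv_mul_le ((n:ℤ) - 1) hb0.ne'
    rw [← hqa] at this; exact this
  have hDm : D * m ≤ (n:ℤ) - 1 := by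
    have := Int.ediv_mul_le ((n:ℤ) - 1) hm0.ne'
    rw [← hD] at this; exact this
  have hqdb : qd * b ≤ D := by
    have := Int.ediv_mul_le D hb0.ne'
    rw [← hqd] at this; exact this
  clear_value Rf qa D qd q T Mo
  -- now pass to the reals
  set x : ℝ := (n:ℝ) with hx
  have hmR : (2:ℝ) ≤ (m:ℝ) := by exact_mod_cast hm
  have hmR0 : (0:ℝ) < (m:ℝ) := by linarith
  have hbR0 : (0:ℝ) < (b:ℝ) := by exact_mod_cast hb0
  have hbR : (1:ℝ) ≤ (b:ℝ) := by exact_mod_cast hb0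
  have hMR : ((Rf.card : ℕ) : ℝ) ≤ (b:ℝ)^2 := by
    rw [sq]
    exact_mod_cast hMb
  have hMR0 : (0:ℝ) ≤ ((Rf.card : ℕ) : ℝ) := by positivity
  have hxb : (b:ℝ) ≤ x := by
    have hK0 : 0 ≤ K/ε := le_of_lt (div_pos hKpos hε)
    have : (0:ℝ) ≤ (m:ℝ) := by linarith
    have : (0:ℝ) ≤ (k:ℝ) := by positivity
    simp only [hx]
    linarith
  have hx1 : (1:ℝ) ≤ x := by rw [hx]; exact_mod_cast hn1'
  have hxK : (m:ℝ) + K/ε ≤ x := by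
    have : (0:ℝ) ≤ (k:ℝ) := by positivity
    linarith
  -- real versions
  have hMoR : (Mo:ℝ) ≤ ((Rf.card : ℕ):ℝ) * (((qa:ℝ) + 1) * ((qd:ℝ) + 1)) := by
    exact_mod_cast hMoub
  have hTR : x * (x - (m:ℝ) + 1) ≤ (T:ℝ) * (m:ℝ) := by rw [hx]; exact_mod_cast hTlb2
  have hqaR : (qa:ℝ) * (b:ℝ) ≤ x - 1 := by rw [hx]; exact_mod_cast hqab
  have hDR : (D:ℝ) * (m:ℝ) ≤ x - 1 := by rw [hx]; exact_mod_cast hDm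
  have hqdR : (qd:ℝ) * (b:ℝ) ≤ (D:ℝ) := by exact_mod_cast hqdb
  have hqaR0 : (0:ℝ) ≤ (qa:ℝ) := by exact_mod_cast hqa0
  have hqdR0 : (0:ℝ) ≤ (qd:ℝ) := by exact_mod_cast hqd0
  have hDR0 : (0:ℝ) ≤ (D:ℝ) := by exact_mod_cast hD0
  set Mr : ℝ := ((Rf.card : ℕ):ℝ) with hMr
  -- key chain
  have f1 : ((qa:ℝ)+1)*(b:ℝ) ≤ x - 1 + (b:ℝ) := by linarith
  have f2 : ((qd:ℝ)+1)*((m:ℝ)*(b:ℝ)) ≤ x - 1 + (m:ℝ)*(b:ℝ) := by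
    have h2' : (qd:ℝ)*(b:ℝ)*(m:ℝ) ≤ (D:ℝ)*(m:ℝ) :=
      mul_le_mul_of_nonneg_right hqdR (by linarith)
    linarith
  have step0 : (Mo:ℝ) * ((m:ℝ)*(b:ℝ)^2) ≤ Mr * (x - 1 + (b:ℝ)) * (x - 1 + (m:ℝ)*(b:ℝ)) := by
    have g1 : (Mo:ℝ) * ((m:ℝ)*(b:ℝ)^2) ≤ (Mr * (((qa:ℝ)+1)*((qd:ℝ)+1))) * ((m:ℝ)*(b:ℝ)^2) := by
      apply mul_le_mul_of_nonneg_right hMoR (by nlinarith)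
    have g2 : (Mr * (((qa:ℝ)+1)*((qd:ℝ)+1))) * ((m:ℝ)*(b:ℝ)^2)
        = Mr * ((((qa:ℝ)+1)*(b:ℝ)) * ((((qd:ℝ)+1))*((m:ℝ)*(b:ℝ)))) := by ring
    have g3 : Mr * ((((qa:ℝ)+1)*(b:ℝ)) * ((((qd:ℝ)+1))*((m:ℝ)*(b:ℝ))))
        ≤ Mr * ((x - 1 + (b:ℝ)) * (x - 1 + (m:ℝ)*(b:ℝ))) := by
      apply mul_le_mul_of_nonneg_left _ hMR0
      apply mul_le_mul f1 f2 (mul_nonneg (by linarith) (mul_nonneg hmR0.le hbR0.le)) (by linarith)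
    calc (Mo:ℝ) * ((m:ℝ)*(b:ℝ)^2) ≤ _ := g1
      _ = _ := g2
      _ ≤ _ := g3
      _ = Mr * (x - 1 + (b:ℝ)) * (x - 1 + (m:ℝ)*(b:ℝ)) := by ring
  -- polynomial step
  have hKe : K ≤ ε * (x - (m:ℝ) + 1) := by
    have h' : K/ε ≤ x - (m:ℝ) + 1 := by linarith
    calc K = ε * (K/ε) := by field_simp
      _ ≤ ε * (x - (m:ℝ) + 1) := by
          apply mul_le_mul_of_nonneg_left h' hε.le
  have stepA : (x - 1 + (b:ℝ)) * (x - 1 + (m:ℝ)*(b:ℝ)) ≤ x*(x - (m:ℝ) + 1) + K*x := by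
    rw [hK]
    nlinarith [mul_le_mul_of_nonneg_left hxb (by nlinarith : (0:ℝ) ≤ (m:ℝ)*(b:ℝ)), hx1, hmR, hbR]
  have stepB : Mr * (K*x) ≤ ε * (b:ℝ)^2 * (x*(x - (m:ℝ) + 1)) := by
    have b1 : Mr * (K*x) ≤ (b:ℝ)^2 * (K*x) := by
      apply mul_le_mul_of_nonneg_right hMR (by nlinarith)
    have b2 : (b:ℝ)^2 * (K*x) ≤ (b:ℝ)^2 * ((ε * (x - (m:ℝ) + 1))*x) := by
      apply mul_le_mul_of_nonneg_left _ (by positivity)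
      apply mul_le_mul_of_nonneg_right hKe (by linarith)
    calc Mr * (K*x) ≤ _ := b1
      _ ≤ _ := b2
      _ = ε * (b:ℝ)^2 * (x*(x - (m:ℝ) + 1)) := by ring
  have main : Mr * (x - 1 + (b:ℝ)) * (x - 1 + (m:ℝ)*(b:ℝ))
      ≤ (Mr + ε*(b:ℝ)^2) * (x*(x - (m:ℝ) + 1)) := by
    have a1 : Mr * ((x - 1 + (b:ℝ)) * (x - 1 + (m:ℝ)*(b:ℝ)))
        ≤ Mr * (x*(x - (m:ℝ) + 1) + K*x) :=
      mul_le_mul_of_nonneg_left stepA hMR0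
    nlinarith [stepB]
  have last : (Mr + ε*(b:ℝ)^2) * (x*(x - (m:ℝ) + 1)) ≤ (Mr + ε*(b:ℝ)^2) * ((T:ℝ)*(m:ℝ)) := by
    apply mul_le_mul_of_nonneg_left hTR (by nlinarith [sq_nonneg (b:ℝ)])
  have final : (Mo:ℝ) * ((m:ℝ)*(b:ℝ)^2) ≤ (Mr + ε*(b:ℝ)^2) * ((T:ℝ)*(m:ℝ)) :=
    le_trans step0 (le_trans main last)
  -- rearrange to the stated form
  have hgoal : (Mo:ℝ) ≤ (Mr / (b:ℝ)^2 + ε) * (T:ℝ) := by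
    have hpos : (0:ℝ) < (m:ℝ)*(b:ℝ)^2 := by nlinarith
    rw [← mul_le_mul_iff_of_pos_right hpos]
    calc (Mo:ℝ) * ((m:ℝ)*(b:ℝ)^2) ≤ (Mr + ε*(b:ℝ)^2) * ((T:ℝ)*(m:ℝ)) := final
      _ = (Mr / (b:ℝ)^2 + ε) * (T:ℝ) * ((m:ℝ)*(b:ℝ)^2) := by
          field_simp
  rw [intervalMonoAPCount_eq n k hk c, intervalAPCount_eq n k hk, ← hRfcard, ← hMo, ← hT]
  exact hgoal
end

section
/- For every integer k ≥ 3 and all positive integers b and n with b dividing n, (min over 2-colorings c of Z_n of M_k(n,c))/n² ≤ (min over 2-colorings B of Z_b of M_k(b,B))/b². -/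
/-- Fibers of the projection `ZMod (b*m) → ZMod b` have cardinality `m`. -/
lemma fiber_card_s10 (b m : ℕ) (hb : 0 < b) (hm : 0 < m) (h : b ∣ b * m)
    (y : ZMod b) :
    Nat.card {x : ZMod (b * m) | ZMod.castHom h (ZMod b) x = y} = m := by
  haveI : NeZero b := ⟨hb.ne'⟩
  haveI : NeZero (b * m) := ⟨(Nat.mul_pos hb hm).ne'⟩
  have hpi : ∀ x : ZMod (b * m), ZMod.castHom h (ZMod b) x = ((x.val : ℕ) : ZMod b) := by
    intro x
    rw [ZMod.castHom_apply, ← ZMod.natCast_val]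
  have hlt : ∀ t : Fin m, y.val + b * (t : ℕ) < b * m := by
    intro t
    calc y.val + b * (t : ℕ) < b + b * (t : ℕ) := Nat.add_lt_add_right (ZMod.val_lt y) _
      _ = b * ((t : ℕ) + 1) := by ring
      _ ≤ b * m := Nat.mul_le_mul_left b (Nat.succ_le_of_lt t.isLt)
  have hset : {x : ZMod (b * m) | ZMod.castHom h (ZMod b) x = y}
      = (fun t : Fin m => ((y.val + b * (t : ℕ) : ℕ) : ZMod (b * m))) '' Set.univ := by
    ext x
    simp only [Set.mem_setOf_eq, Set.image_univ, Set.mem_range, hpi]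
    constructor
    · intro hx
      refine ⟨⟨x.val / b, ?_⟩, ?_⟩
      · exact Nat.div_lt_of_lt_mul (by simpa [mul_comm] using x.val_lt)
      · have hy : y.val = x.val % b := by
          rw [← hx, ZMod.val_natCast]
        rw [hy, Nat.mod_add_div, ZMod.natCast_zmod_val]
    · rintro ⟨t, rfl⟩
      rw [ZMod.val_cast_of_lt (hlt t)]
      push_cast
      simp [ZMod.natCast_self, ZMod.natCast_zmod_val]
  rw [hset, Nat.card_coe_set_eq]
  rw [Set.ncard_image_of_injective _ ?_, Set.ncard_univ, Nat.card_eq_fintype_card,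
    Fintype.card_fin]
  intro t1 t2 hteq
  have hv := congrArg ZMod.val hteq
  rw [ZMod.val_cast_of_lt (hlt t1), ZMod.val_cast_of_lt (hlt t2)] at hv
  have hbt : b * (t1 : ℕ) = b * (t2 : ℕ) := by omega
  exact Fin.ext (Nat.eq_of_mul_eq_mul_left hb hbt)

lemma monoAPCount_comp (b m k : ℕ) (hb : 0 < b) (hm : 0 < m) (h : b ∣ b * m)
    (B : ZMod b → Fin 2) :
    monoAPCount (b * m) k (fun x => B (ZMod.castHom h (ZMod b) x))
      = m ^ 2 * monoAPCount b k B := by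
  classical
  haveI : NeZero b := ⟨hb.ne'⟩
  haveI : NeZero (b * m) := ⟨(Nat.mul_pos hb hm).ne'⟩
  set π := ZMod.castHom h (ZMod b) with hπ
  set f : ZMod (b * m) × ZMod (b * m) → ZMod b × ZMod b := fun p => (π p.1, π p.2) with hf
  set S : Set (ZMod b × ZMod b) := {q | ∀ i < k, B (q.1 + i • q.2) = B q.1} with hS
  have hpre : {p : ZMod (b * m) × ZMod (b * m) |
      ∀ i < k, B (π (p.1 + i • p.2)) = B (π p.1)} = f ⁻¹' S := by
    ext p
    simp only [Set.mem_setOf_eq, Set.mem_preimage, hf, hS]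
    constructor <;> intro hp i hi <;> have := hp i hi <;>
      simpa [map_add, map_nsmul] using this
  have hfib : ∀ q : ZMod b × ZMod b, Nat.card (f ⁻¹' {q}) = m ^ 2 := by
    intro q
    have : f ⁻¹' {q} = {x | π x = q.1} ×ˢ {x | π x = q.2} := by
      ext p
      simp [hf, Prod.ext_iff, Set.mem_prod]
    rw [this, Nat.card_congr (Equiv.Set.prod _ _),
      Nat.card_prod, fiber_card_s10 b m hb hm h, fiber_card_s10 b m hb hm h, sq]
  -- now count via Finsets
  have hcount : Set.ncard (f ⁻¹' S) = m ^ 2 * S.ncard := by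
    rw [Set.ncard_eq_toFinset_card' (f ⁻¹' S), Set.ncard_eq_toFinset_card' S]
    rw [Finset.card_eq_sum_card_fiberwise (f := f) (t := S.toFinset)
      (fun x hx => by simpa using (by simpa using hx : x ∈ f ⁻¹' S))]
    have : ∀ q ∈ S.toFinset,
        ((f ⁻¹' S).toFinset.filter (fun a => f a = q)).card = m ^ 2 := by
      intro q hq
      have hq' : q ∈ S := by simpa using hq
      have : (f ⁻¹' S).toFinset.filter (fun a => f a = q)
          = Finset.univ.filter (fun a => f a = q) := by
        ext a
        simp only [Finset.mem_filter, Set.mem_toFinset, Set.mem_preimage,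
          Finset.mem_univ, true_and]
        constructor
        · rintro ⟨-, h2⟩; exact h2
        · intro h2; exact ⟨h2 ▸ hq', h2⟩
      rw [this]
      have := hfib q
      rw [Nat.card_eq_fintype_card, Fintype.card_subtype] at this
      simpa using this
    rw [Finset.sum_congr rfl this, Finset.sum_const, smul_eq_mul, mul_comm]
  unfold monoAPCount
  rw [hpre, hcount]

theorem mk_dvd_upper_bound :
    ∀ k : ℕ, 3 ≤ k → ∀ b n : ℕ, 0 < b → 0 < n → b ∣ n →
      (minMonoAPCount n k : ℝ) / (n : ℝ) ^ 2 ≤ (minMonoAPCount b k : ℝ) / (b : ℝ) ^ 2 := by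
  intro k hk b n hb hn hdvd
  obtain ⟨m, rfl⟩ := hdvd
  have hm : 0 < m := Nat.pos_of_ne_zero fun h0 => by simp [h0] at hn
  have hne : {x : ℕ | ∃ c : ZMod b → Fin 2, monoAPCount b k c = x}.Nonempty :=
    ⟨_, fun _ => 0, rfl⟩
  obtain ⟨B, hB⟩ := Nat.sInf_mem hne
  have hle : minMonoAPCount (b * m) k ≤ m ^ 2 * minMonoAPCount b k := by
    unfold minMonoAPCount
    rw [← hB, ← monoAPCount_comp b m k hb hm ⟨m, rfl⟩ B]
    exact Nat.sInf_le ⟨_, rfl⟩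
  have h1 : (minMonoAPCount (b * m) k : ℝ) ≤ (m : ℝ) ^ 2 * minMonoAPCount b k := by
    exact_mod_cast hle
  have hb' : (0:ℝ) < ((b * m : ℕ) : ℝ) ^ 2 := by positivity
  calc (minMonoAPCount (b * m) k : ℝ) / ((b * m : ℕ) : ℝ) ^ 2
      ≤ ((m : ℝ) ^ 2 * minMonoAPCount b k) / ((b * m : ℕ) : ℝ) ^ 2 := by gcongr
    _ = (minMonoAPCount b k : ℝ) / (b : ℝ) ^ 2 := by
        push_cast
        field_simp
end

section
/- For every positive integer n, every 2-coloring c of Z_n satisfies M_3(n,c) ≥ n²/4, i.e., the number of pairs (a,d) ∈ Z_n × Z_n with c(a) = c(a+d) = c(a+2d) is at least n²/4. -/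
theorem m3_lower_bound :
    ∀ n : ℕ, 0 < n → ∀ c : ZMod n → Fin 2,
      (n : ℝ) ^ 2 / 4 ≤ (monoAPCount n 3 c : ℝ) := by
  intro n hn c
  haveI : NeZero n := ⟨hn.ne'⟩
  classical
  -- the sign function
  set s : ZMod n → ℝ := fun x => if c x = 0 then 1 else -1 with hs
  have hsq : ∀ x, s x * s x = 1 := by
    intro x; by_cases h : c x = 0 <;> simp [hs, h]
  have h2 : ∀ a : Fin 2, a = 0 ∨ a = 1 := by decide
  have hind : ∀ x y, (if c x = c y then (1:ℝ) else 0) = (1 + s x * s y) / 2 := by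
    intro x y
    rcases h2 (c x) with hx | hx <;> rcases h2 (c y) with hy | hy <;>
      simp [hs, hx, hy]
  -- rewrite the count as a Finset card
  set Q : ZMod n × ZMod n → Prop := fun p =>
    c (p.1 + p.2) = c p.1 ∧ c (p.1 + (p.2 + p.2)) = c p.1 with hQ
  have hset : {p : ZMod n × ZMod n | ∀ i < 3, c (p.1 + i • p.2) = c p.1}
      = ↑(Finset.univ.filter Q) := by
    ext p
    simp only [Set.mem_setOf_eq, Finset.coe_filter, Finset.mem_univ, true_and, hQ]
    constructor
    · intro h
      refine ⟨by simpa using h 1 (by norm_num), by simpa only [two_nsmul] using h 2 (by norm_num)⟩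
    · rintro ⟨ha, hb⟩ i hi
      interval_cases i
      · simp
      · simpa using ha
      · simpa only [two_nsmul] using hb
  have hM : (monoAPCount n 3 c : ℝ)
      = ∑ p : ZMod n × ZMod n, if Q p then (1:ℝ) else 0 := by
    rw [monoAPCount, hset, Set.ncard_coe_finset, Finset.sum_boole]
  -- pointwise expansion
  have hpt : ∀ p : ZMod n × ZMod n, (if Q p then (1:ℝ) else 0)
      = (1 + s p.1 * s (p.1 + p.2) + s p.1 * s (p.1 + (p.2 + p.2))
          + s (p.1 + p.2) * s (p.1 + (p.2 + p.2))) / 4 := by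
    intro p
    have h1 : (if Q p then (1:ℝ) else 0)
        = (if c (p.1 + p.2) = c p.1 then (1:ℝ) else 0)
          * (if c (p.1 + (p.2 + p.2)) = c p.1 then (1:ℝ) else 0) := by
      by_cases hA : c (p.1 + p.2) = c p.1 <;>
        by_cases hB : c (p.1 + (p.2 + p.2)) = c p.1 <;> simp [hQ, hA, hB]
    rw [h1, hind, hind]
    linear_combination (s (p.1 + p.2) * s (p.1 + (p.2 + p.2)) / 4) * hsq p.1
  -- shift lemmas
  have hshift : ∀ (a : ZMod n) (f : ZMod n → ℝ), ∑ x : ZMod n, f (a + x) = ∑ x, f x :=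
    fun a f => Equiv.sum_comp (Equiv.addLeft a) f
  have hshiftR : ∀ (a : ZMod n) (f : ZMod n → ℝ), ∑ x : ZMod n, f (x + a) = ∑ x, f x :=
    fun a f => Equiv.sum_comp (Equiv.addRight a) f
  set S := ∑ x : ZMod n, s x with hS
  -- T1
  have hT1 : ∑ a : ZMod n, ∑ d : ZMod n, s a * s (a + d) = S * S := by
    calc ∑ a : ZMod n, ∑ d : ZMod n, s a * s (a + d)
        = ∑ a : ZMod n, s a * S := by
          refine Finset.sum_congr rfl fun a _ => ?_
          rw [← Finset.mul_sum, hshift a s]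
      _ = S * S := by rw [← Finset.sum_mul]
  -- T2
  have hT2 : ∑ a : ZMod n, ∑ d : ZMod n, s (a + d) * s (a + (d + d)) = S * S := by
    rw [Finset.sum_comm]
    calc ∑ d : ZMod n, ∑ a : ZMod n, s (a + d) * s (a + (d + d))
        = ∑ d : ZMod n, ∑ b : ZMod n, s b * s (b + d) := by
          refine Finset.sum_congr rfl fun d _ => ?_
          have := hshiftR d (fun b => s b * s (b + d))
          simpa [add_assoc] using this
      _ = S * S := by rw [Finset.sum_comm]; exact hT1
  -- T3
  set g : ZMod n → ℝ := fun u => ∑ t : ZMod n, s (u + (t + t)) with hg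
  have hg_shift : ∀ u t : ZMod n, g (u + (t + t)) = g u := by
    intro u t
    show (∑ t' : ZMod n, s (u + (t + t) + (t' + t'))) = ∑ t' : ZMod n, s (u + (t' + t'))
    calc ∑ t' : ZMod n, s (u + (t + t) + (t' + t'))
        = ∑ t' : ZMod n, s (u + ((t + t') + (t + t'))) := by
          refine Finset.sum_congr rfl fun t' _ => ?_
          congr 1; ring
      _ = ∑ r : ZMod n, s (u + (r + r)) := hshift t (fun r => s (u + (r + r)))
  have hT3key : (∑ u : ZMod n, g u * g u) = (n : ℝ) * (∑ a : ZMod n, s a * g a) := by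
    calc ∑ u : ZMod n, g u * g u
        = ∑ u : ZMod n, ∑ t : ZMod n, s (u + (t + t)) * g u := by
          refine Finset.sum_congr rfl fun u _ => ?_
          rw [← Finset.sum_mul]
      _ = ∑ t : ZMod n, ∑ u : ZMod n, s (u + (t + t)) * g (u + (t + t)) := by
          rw [Finset.sum_comm]
          refine Finset.sum_congr rfl fun t _ => Finset.sum_congr rfl fun u _ => ?_
          rw [hg_shift]
      _ = ∑ t : ZMod n, ∑ v : ZMod n, s v * g v := by
          refine Finset.sum_congr rfl fun t _ => ?_
          exact hshiftR (t + t) (fun v => s v * g v)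
      _ = (n : ℝ) * (∑ a : ZMod n, s a * g a) := by
          rw [Finset.sum_const, nsmul_eq_mul, Finset.card_univ, ZMod.card]
  have hnpos : (0:ℝ) < n := by exact_mod_cast hn
  have hgsq : (0:ℝ) ≤ ∑ u : ZMod n, g u * g u :=
    Finset.sum_nonneg fun u _ => mul_self_nonneg _
  have hT3nonneg : 0 ≤ ∑ a : ZMod n, s a * g a := by nlinarith
  have hT3sum : ∑ a : ZMod n, ∑ d : ZMod n, s a * s (a + (d + d))
      = ∑ a : ZMod n, s a * g a := by
    refine Finset.sum_congr rfl fun a _ => ?_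
    rw [hg, ← Finset.mul_sum]
  have hconst : ∑ _a : ZMod n, ∑ _d : ZMod n, (1:ℝ) = (n:ℝ)^2 := by
    simp [Finset.card_univ, ZMod.card]
    ring
  have key : (monoAPCount n 3 c : ℝ)
      = ((n:ℝ)^2 + S*S + (∑ a : ZMod n, s a * g a) + S*S)/4 := by
    calc (monoAPCount n 3 c : ℝ)
        = ∑ a : ZMod n, ∑ d : ZMod n,
            (1 + s a * s (a + d) + s a * s (a + (d + d))
              + s (a + d) * s (a + (d + d))) / 4 := by
          rw [hM]
          rw [Finset.sum_congr rfl fun p _ => hpt p]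
          exact Fintype.sum_prod_type _
      _ = ((∑ _a : ZMod n, ∑ _d : ZMod n, (1:ℝ))
            + (∑ a : ZMod n, ∑ d : ZMod n, s a * s (a + d))
            + (∑ a : ZMod n, ∑ d : ZMod n, s a * s (a + (d + d)))
            + (∑ a : ZMod n, ∑ d : ZMod n, s (a + d) * s (a + (d + d))))/4 := by
          simp only [add_div, Finset.sum_div, Finset.sum_add_distrib]
      _ = ((n:ℝ)^2 + S*S + (∑ a : ZMod n, s a * g a) + S*S)/4 := by
          rw [hconst, hT1, hT2, hT3sum]
  rw [key]
  have hSsq : (0:ℝ) ≤ S * S := mul_self_nonneg S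
  linarith
end

section
/- For every ε > 0 there exists N such that for every integer n ≥ N there exists a 2-coloring c of Z_n with M_3(n,c) ≤ (1/4 + ε)·n². Together with the matching lower bound, this shows min_c M_3(n,c)/n² → 1/4 as n → ∞. -/
open Finset

/-- For a nondegenerate pair `(a,d)` (i.e. `2d ≠ 0`), at most `2^(n-2)` colorings make
the 3-AP `(a,d)` monochromatic. -/
lemma aux_count (n : ℕ) [NeZero n] (a d : ZMod n) (h2 : d + d ≠ 0) :
    (Finset.univ.filter fun c : ZMod n → Fin 2 =>
      ∀ i < 3, c (a + i • d) = c a).card ≤ 2 ^ (n - 2) := by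
  classical
  have hd : d ≠ 0 := fun h => h2 (by rw [h, add_zero])
  set S : Finset (ZMod n) := {a + d, a + d + d} with hS
  have haS : a ∉ S := by
    simp only [hS, mem_insert, mem_singleton]
    push_neg
    constructor
    · intro h
      exact hd (by simpa using (left_eq_add.mp h))
    · intro h
      apply h2
      have : a = a + (d + d) := by rw [← add_assoc]; exact h
      simpa using (left_eq_add.mp this)
  have hScard : S.card = 2 := by
    rw [hS, card_insert_of_notMem, card_singleton]
    simp only [mem_singleton]
    intro h
    exact hd (by simpa using (left_eq_add.mp h))
  have key : ∀ c₁ ∈ (Finset.univ.filter fun c : ZMod n → Fin 2 =>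
      ∀ i < 3, c (a + i • d) = c a), ∀ c₂ ∈ (Finset.univ.filter fun c : ZMod n → Fin 2 =>
      ∀ i < 3, c (a + i • d) = c a),
      (fun (c : ZMod n → Fin 2) (x : {x : ZMod n // x ∈ Sᶜ}) => c x.1) c₁ =
      (fun (c : ZMod n → Fin 2) (x : {x : ZMod n // x ∈ Sᶜ}) => c x.1) c₂ → c₁ = c₂ := by
    intro c₁ h₁ c₂ h₂ heq
    have geq : ∀ x ∉ S, c₁ x = c₂ x := fun x hx =>
      congrFun heq ⟨x, by simpa using hx⟩
    have P₁ := (mem_filter.mp h₁).2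
    have P₂ := (mem_filter.mp h₂).2
    have e11 : c₁ (a + d) = c₁ a := by simpa using P₁ 1 (by norm_num)
    have e12 : c₁ (a + d + d) = c₁ a := by
      have := P₁ 2 (by norm_num)
      rw [two_smul, ← add_assoc] at this; exact this
    have e21 : c₂ (a + d) = c₂ a := by simpa using P₂ 1 (by norm_num)
    have e22 : c₂ (a + d + d) = c₂ a := by
      have := P₂ 2 (by norm_num)
      rw [two_smul, ← add_assoc] at this; exact this
    have ha : c₁ a = c₂ a := geq a haS
    funext x
    by_cases hx : x ∈ S
    · rcases mem_insert.mp hx with h | h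
      · rw [h, e11, e21, ha]
      · rw [mem_singleton.mp h, e12, e22, ha]
    · exact geq x hx
  have hcard := Finset.card_le_card_of_injOn _
    (fun c _ => Finset.mem_univ ((fun (c : ZMod n → Fin 2) (x : {x : ZMod n // x ∈ Sᶜ}) => c x.1) c))
    key
  refine hcard.trans ?_
  rw [Finset.card_univ, Fintype.card_fun, Fintype.card_fin, Fintype.card_coe,
    Finset.card_compl, hScard]
  rw [ZMod.card]

/-- The 2-torsion of `ZMod n` has at most 2 elements. -/
lemma aux_tors (n : ℕ) [NeZero n] :
    (Finset.univ.filter fun d : ZMod n => d + d = 0).card ≤ 2 := by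
  classical
  have hsub : (Finset.univ.filter fun d : ZMod n => d + d = 0)
      ⊆ {(0 : ZMod n), ((n / 2 : ℕ) : ZMod n)} := by
    intro d hd
    have h : d + d = 0 := (mem_filter.mp hd).2
    have hdvd : (n : ℕ) ∣ 2 * d.val := by
      have : ((2 * d.val : ℕ) : ZMod n) = 0 := by
        push_cast [ZMod.natCast_val, ZMod.cast_id]
        rw [two_mul]; exact h
      exact (ZMod.natCast_eq_zero_iff _ _).mp this
    have hlt : d.val < n := ZMod.val_lt d
    have hn : 0 < n := Nat.pos_of_ne_zero (NeZero.ne n)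
    obtain ⟨k, hk⟩ := hdvd
    have hk2 : k < 2 := by
      have h1 : n * k < n * 2 := by omega
      exact Nat.lt_of_mul_lt_mul_left h1
    interval_cases k
    · have hv : d.val = 0 := by omega
      have : d = 0 := by
        rwa [← ZMod.val_eq_zero]
      simp [this]
    · have hv : d.val = n / 2 := by omega
      have : d = ((n / 2 : ℕ) : ZMod n) := by
        conv_lhs => rw [← (ZMod.natCast_val d |>.trans (ZMod.cast_id _ _))]
        rw [hv]
      simp [this]
  exact (Finset.card_le_card hsub).trans
    ((Finset.card_insert_le _ _).trans (by simp))

/-- Averaging over all colorings: some coloring has at most `n²/4 + 2n` mono 3-APs. -/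
lemma exists_small (n : ℕ) (hn : 2 ≤ n) :
    ∃ c : ZMod n → Fin 2, (monoAPCount n 3 c : ℝ) ≤ (n : ℝ) ^ 2 / 4 + 2 * n := by
  haveI : NeZero n := ⟨by omega⟩
  classical
  set M : (ZMod n → Fin 2) → ℕ := fun c =>
    (Finset.univ.filter fun p : ZMod n × ZMod n =>
      ∀ i < 3, c (p.1 + i • p.2) = c p.1).card with hM
  have hmono : ∀ c, monoAPCount n 3 c = M c := by
    intro c
    rw [monoAPCount]
    have hset : {p : ZMod n × ZMod n | ∀ i < 3, c (p.1 + i • p.2) = c p.1}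
        = ↑(Finset.univ.filter fun p : ZMod n × ZMod n =>
            ∀ i < 3, c (p.1 + i • p.2) = c p.1) := by
      ext p; simp
    rw [hset, Set.ncard_coe_finset]
  have hswap : ∑ c : ZMod n → Fin 2, M c
      = ∑ p : ZMod n × ZMod n, (Finset.univ.filter fun c : ZMod n → Fin 2 =>
          ∀ i < 3, c (p.1 + i • p.2) = c p.1).card := by
    simp only [hM, Finset.card_filter]
    exact Finset.sum_comm
  have hbound : ∑ p : ZMod n × ZMod n, (Finset.univ.filter fun c : ZMod n → Fin 2 =>
          ∀ i < 3, c (p.1 + i • p.2) = c p.1).card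
      ≤ n ^ 2 * 2 ^ (n - 2) + 2 * n * 2 ^ n := by
    rw [← Finset.sum_filter_add_sum_filter_not Finset.univ
      (fun p : ZMod n × ZMod n => p.2 + p.2 = 0)]
    have hb1 : ∑ p ∈ Finset.univ.filter (fun p : ZMod n × ZMod n => p.2 + p.2 = 0),
        (Finset.univ.filter fun c : ZMod n → Fin 2 =>
          ∀ i < 3, c (p.1 + i • p.2) = c p.1).card ≤ 2 * n * 2 ^ n := by
      refine (Finset.sum_le_card_nsmul _ _ (2 ^ n) ?_).trans ?_
      · intro p _
        refine (Finset.card_filter_le _ _).trans ?_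
        rw [Finset.card_univ, Fintype.card_fun, Fintype.card_fin, ZMod.card]
      · rw [smul_eq_mul]
        have hc : (Finset.univ.filter (fun p : ZMod n × ZMod n => p.2 + p.2 = 0)).card
            ≤ 2 * n := by
          have hsub : Finset.univ.filter (fun p : ZMod n × ZMod n => p.2 + p.2 = 0)
              ⊆ Finset.univ ×ˢ (Finset.univ.filter fun d : ZMod n => d + d = 0) := by
            intro p hp
            rw [Finset.mem_product]
            exact ⟨Finset.mem_univ _, Finset.mem_filter.mpr
              ⟨Finset.mem_univ _, (Finset.mem_filter.mp hp).2⟩⟩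
          refine (Finset.card_le_card hsub).trans ?_
          rw [Finset.card_product, Finset.card_univ, ZMod.card]
          calc n * (Finset.univ.filter fun d : ZMod n => d + d = 0).card
              ≤ n * 2 := Nat.mul_le_mul_left n (aux_tors n)
            _ = 2 * n := Nat.mul_comm n 2
        exact Nat.mul_le_mul_right _ hc
    have hb2 : ∑ p ∈ Finset.univ.filter (fun p : ZMod n × ZMod n => ¬(p.2 + p.2 = 0)),
        (Finset.univ.filter fun c : ZMod n → Fin 2 =>
          ∀ i < 3, c (p.1 + i • p.2) = c p.1).card ≤ n ^ 2 * 2 ^ (n - 2) := by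
      refine (Finset.sum_le_card_nsmul _ _ (2 ^ (n - 2)) ?_).trans ?_
      · intro p hp
        exact aux_count n p.1 p.2 (Finset.mem_filter.mp hp).2
      · rw [smul_eq_mul]
        refine Nat.mul_le_mul_right _ ?_
        refine (Finset.card_filter_le _ _).trans ?_
        rw [Finset.card_univ, Fintype.card_prod, ZMod.card, pow_two]
    exact (Nat.add_le_add hb1 hb2).trans (Nat.le_of_eq (Nat.add_comm _ _))
  have hcardfun : Fintype.card (ZMod n → Fin 2) = 2 ^ n := by
    rw [Fintype.card_fun, Fintype.card_fin, ZMod.card]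
  have havg : ∑ c : ZMod n → Fin 2, (M c : ℝ)
      ≤ ∑ c : ZMod n → Fin 2, ((n : ℝ) ^ 2 / 4 + 2 * n) := by
    rw [← Nat.cast_sum, Finset.sum_const, Finset.card_univ, hcardfun, nsmul_eq_mul]
    have h1 : ((∑ c : ZMod n → Fin 2, M c : ℕ) : ℝ)
        ≤ ((n ^ 2 * 2 ^ (n - 2) + 2 * n * 2 ^ n : ℕ) : ℝ) := by
      exact_mod_cast hswap ▸ hbound
    refine h1.trans ?_
    push_cast
    have hpow : (2 : ℝ) ^ (n - 2) * 4 = 2 ^ n := by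
      rw [show (4 : ℝ) = 2 ^ 2 by norm_num, ← pow_add, Nat.sub_add_cancel hn]
    nlinarith [pow_pos (by norm_num : (0:ℝ) < 2) n, sq_nonneg (n : ℝ)]
  obtain ⟨c, _, hc⟩ := Finset.exists_le_of_sum_le Finset.univ_nonempty havg
  exact ⟨c, by rw [hmono]; exact hc⟩

theorem m3_upper_bound :
    ∀ ε : ℝ, 0 < ε → ∃ N : ℕ, ∀ n : ℕ, N ≤ n →
      ∃ c : ZMod n → Fin 2, (monoAPCount n 3 c : ℝ) ≤ (1 / 4 + ε) * (n : ℝ) ^ 2 := by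
  intro ε hε
  refine ⟨⌈2 / ε⌉₊ + 2, fun n hn => ?_⟩
  have hn2 : 2 ≤ n := le_trans (Nat.le_add_left 2 _) hn
  obtain ⟨c, hc⟩ := exists_small n hn2
  refine ⟨c, hc.trans ?_⟩
  have h1 : (2 / ε : ℝ) ≤ n := by
    refine (Nat.le_ceil _).trans ?_
    exact_mod_cast le_trans (Nat.le_add_right _ 2) hn
  have hn0 : (0 : ℝ) ≤ n := Nat.cast_nonneg n
  have h2 : 2 ≤ ε * n := by
    rw [div_le_iff₀ hε] at h1
    linarith
  nlinarith [mul_le_mul_of_nonneg_right h2 hn0]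
end

section
/- For every integer t ≥ 2, (min over 2-colorings c of Z_{11t} of M_4(11t, c)) ≤ 10·t² + (min over 2-colorings c' of Z_t of M_4(t, c')). Equivalently, m_4(Z_{11t}) ≤ (10 + m_4(Z_t))/121, where m_4(Z_n) = (min_c M_4(n,c))/n². -/
/-- An auxiliary coloring of `Z_11`. -/
def bcol : ZMod 11 → Fin 2 := fun x =>
  if x.val = 2 ∨ x.val = 6 ∨ x.val = 7 ∨ x.val = 8 ∨ x.val = 10 then 1 else 0

/-- In any 4-AP of `Z_11` with nonzero difference, two of the nonzero terms
get different `bcol`-colors. -/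
lemma bcol_key : ∀ a d : ZMod 11, d ≠ 0 → ∃ i : Fin 4, ∃ j : Fin 4,
    a + (i : ℕ) • d ≠ 0 ∧ a + (j : ℕ) • d ≠ 0 ∧
      bcol (a + (i : ℕ) • d) ≠ bcol (a + (j : ℕ) • d) := by decide

lemma monoAPCount_eq_card_s14 (N : ℕ) [NeZero N] (cc : ZMod N → Fin 2) :
    monoAPCount N 4 cc =
      (Finset.univ.filter
        (fun p : ZMod N × ZMod N => ∀ i < 4, cc (p.1 + i • p.2) = cc p.1)).card := by
  classical
  rw [monoAPCount, ← Set.ncard_coe_finset]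
  congr 1
  ext p
  simp

theorem m4_recursive_11 :
    ∀ t : ℕ, 2 ≤ t →
      minMonoAPCount (11 * t) 4 ≤ 10 * t ^ 2 + minMonoAPCount t 4 := by
  classical
  intro t ht
  haveI : NeZero t := ⟨by omega⟩
  haveI : NeZero (11 * t) := ⟨by omega⟩
  set n := 11 * t with hn
  -- optimal coloring of ZMod t
  have hne : {m : ℕ | ∃ c : ZMod t → Fin 2, monoAPCount t 4 c = m}.Nonempty :=
    ⟨monoAPCount t 4 (fun _ => 0), ⟨fun _ => 0, rfl⟩⟩
  obtain ⟨c', hc'⟩ : ∃ c' : ZMod t → Fin 2, monoAPCount t 4 c' = minMonoAPCount t 4 :=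
    Nat.sInf_mem hne
  have hdvd : (11 : ℕ) ∣ n := ⟨t, rfl⟩
  set π : ZMod n →+* ZMod 11 := ZMod.castHom hdvd (ZMod 11) with hπdef
  have hπval : ∀ x : ZMod n, π x = (x.val : ZMod 11) := by
    intro x; rw [hπdef, ZMod.castHom_apply, ← ZMod.natCast_val]
  have hπ0 : ∀ x : ZMod n, π x = 0 ↔ 11 ∣ x.val := by
    intro x; rw [hπval, ZMod.natCast_eq_zero_iff]
  set g : ZMod n → ZMod t := fun x => ((x.val / 11 : ℕ) : ZMod t) with hgdef
  set c : ZMod n → Fin 2 :=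
    fun x => if π x = 0 then c' (g x) else bcol (π x) with hcdef
  -- g is additive on the kernel, and the kernel is closed under addition
  have hker : ∀ x y : ZMod n, 11 ∣ x.val → 11 ∣ y.val → 11 ∣ (x + y).val := by
    intro x y hx hy
    rw [ZMod.val_add, Nat.dvd_mod_iff hdvd]
    exact Nat.dvd_add hx hy
  have hgadd : ∀ x y : ZMod n, 11 ∣ x.val → 11 ∣ y.val → g (x + y) = g x + g y := by
    intro x y ⟨α, hα⟩ ⟨β, hβ⟩
    have hval : (x + y).val = 11 * ((α + β) % t) := by
      rw [ZMod.val_add, hα, hβ, hn, ← Nat.mul_add, Nat.mul_mod_mul_left]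
    simp only [hgdef, hval, hα, hβ, Nat.mul_div_cancel_left _ (by norm_num : 0 < 11)]
    rw [ZMod.natCast_mod]
    push_cast
    ring
  have hsmul : ∀ (i : ℕ) (a d : ZMod n), 11 ∣ a.val → 11 ∣ d.val →
      11 ∣ (a + i • d).val ∧ g (a + i • d) = g a + i • g d := by
    intro i a d ha hd
    induction i with
    | zero => simpa using ha
    | succ i ih =>
      have hre : a + (i + 1) • d = (a + i • d) + d := by
        rw [succ_nsmul, add_assoc]
      constructor
      · rw [hre]; exact hker _ _ ih.1 hd
      · rw [hre, hgadd _ _ ih.1 hd, ih.2, succ_nsmul, add_assoc]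
  have hginv : ∀ x : ZMod n, 11 ∣ x.val → (11 * (g x).val : ℕ) = x.val := by
    intro x ⟨α, hα⟩
    have hαt : α < t := by
      have := x.val_lt; rw [hα] at this; omega
    simp only [hgdef, hα, Nat.mul_div_cancel_left _ (by norm_num : 0 < 11),
      ZMod.val_natCast, Nat.mod_eq_of_lt hαt]
  -- the three finsets
  set S : Finset (ZMod n × ZMod n) :=
    Finset.univ.filter (fun p => ∀ i < 4, c (p.1 + i • p.2) = c p.1) with hSdef
  set F0 : Finset (ZMod n × ZMod n) :=
    Finset.univ.filter (fun p =>
      (∀ i < 4, c (p.1 + i • p.2) = c p.1) ∧ π p.1 = 0 ∧ π p.2 = 0) with hF0def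
  set F1 : Finset (ZMod n × ZMod n) :=
    Finset.univ.filter (fun p => π p.1 ≠ 0 ∧ π p.2 = 0) with hF1def
  -- S ⊆ F0 ∪ F1
  have hsub : S ⊆ F0 ∪ F1 := by
    intro p hp
    rw [hSdef, Finset.mem_filter] at hp
    have hmono := hp.2
    by_cases h2 : π p.2 = 0
    · by_cases h1 : π p.1 = 0
      · apply Finset.mem_union_left
        rw [hF0def, Finset.mem_filter]
        exact ⟨Finset.mem_univ _, hmono, h1, h2⟩
      · apply Finset.mem_union_right
        rw [hF1def, Finset.mem_filter]
        exact ⟨Finset.mem_univ _, h1, h2⟩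
    · exfalso
      obtain ⟨i, j, hi0, hj0, hij⟩ := bcol_key (π p.1) (π p.2) h2
      have hπt : ∀ m : ℕ, π (p.1 + m • p.2) = π p.1 + m • π p.2 := by
        intro m; rw [map_add, map_nsmul]
      have hci : c (p.1 + (i : ℕ) • p.2) = bcol (π p.1 + (i : ℕ) • π p.2) := by
        rw [hcdef]; simp only [hπt]; rw [if_neg hi0]
      have hcj : c (p.1 + (j : ℕ) • p.2) = bcol (π p.1 + (j : ℕ) • π p.2) := by
        rw [hcdef]; simp only [hπt]; rw [if_neg hj0]
      apply hij
      rw [← hci, ← hcj, hmono _ i.isLt, hmono _ j.isLt]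
  -- card of F1
  have hK : (Finset.univ.filter (fun x : ZMod n => π x = 0)).card = t := by
    refine (Finset.card_nbij' g (fun y : ZMod t => ((11 * y.val : ℕ) : ZMod n))
      ?_ ?_ ?_ ?_).trans (by rw [Finset.card_univ, ZMod.card])
    · intro x _; exact Finset.mem_univ _
    · intro y _
      rw [Finset.mem_coe, Finset.mem_filter]
      refine ⟨Finset.mem_univ _, ?_⟩
      rw [map_natCast, Nat.cast_mul, ZMod.natCast_self, zero_mul]
    · intro x hx
      rw [Finset.mem_coe, Finset.mem_filter, hπ0] at hx
      show ((11 * (g x).val : ℕ) : ZMod n) = x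
      rw [hginv x hx.2, ZMod.natCast_val, ZMod.cast_id]
    · intro y _
      have hyt : y.val < t := y.val_lt
      have hval : (((11 * y.val : ℕ) : ZMod n)).val = 11 * y.val := by
        rw [ZMod.val_natCast, hn, Nat.mul_mod_mul_left, Nat.mod_eq_of_lt hyt]
      simp only [hgdef, hval, Nat.mul_div_cancel_left _ (by norm_num : 0 < 11),
        ZMod.natCast_val, ZMod.cast_id]
  have hA : (Finset.univ.filter (fun x : ZMod n => π x ≠ 0)).card = 10 * t := by
    have he : (Finset.univ.filter (fun x : ZMod n => π x ≠ 0)) =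
        Finset.univ \ (Finset.univ.filter (fun x : ZMod n => π x = 0)) := by
      ext x; simp
    rw [he, Finset.card_sdiff_of_subset (Finset.filter_subset _ _), hK, Finset.card_univ, ZMod.card]
    omega
  have hcard1 : F1.card = 10 * t ^ 2 := by
    have hprod : F1 = (Finset.univ.filter (fun x : ZMod n => π x ≠ 0)) ×ˢ
        (Finset.univ.filter (fun x : ZMod n => π x = 0)) := by
      ext ⟨x, y⟩
      simp [hF1def, Finset.mem_product]
    rw [hprod, Finset.card_product, hA, hK]
    ring
  -- card of F0
  have hcard0 : F0.card ≤ monoAPCount t 4 c' := by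
    rw [monoAPCount_eq_card_s14]
    apply Finset.card_le_card_of_injOn (fun p => (g p.1, g p.2))
    · intro p hp
      rw [Finset.mem_coe, hF0def, Finset.mem_filter] at hp
      obtain ⟨-, hmono, h1, h2⟩ := hp
      rw [hπ0] at h1 h2
      rw [Finset.mem_coe, Finset.mem_filter]
      refine ⟨Finset.mem_univ _, ?_⟩
      intro i hi
      have hs := hsmul i p.1 p.2 h1 h2
      have hc1 : c p.1 = c' (g p.1) := by
        rw [hcdef]; simp only []; rw [if_pos ((hπ0 p.1).2 h1)]
      have hc2 : c (p.1 + i • p.2) = c' (g (p.1 + i • p.2)) := by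
        rw [hcdef]; simp only []; rw [if_pos ((hπ0 _).2 hs.1)]
      calc c' (g p.1 + i • g p.2) = c' (g (p.1 + i • p.2)) := by rw [hs.2]
        _ = c (p.1 + i • p.2) := hc2.symm
        _ = c p.1 := hmono i hi
        _ = c' (g p.1) := hc1
    · intro p hp q hq hpq
      rw [Finset.mem_coe, Finset.mem_filter] at hp hq
      have hp1 := (hπ0 p.1).1 hp.2.2.1
      have hp2 := (hπ0 p.2).1 hp.2.2.2
      have hq1 := (hπ0 q.1).1 hq.2.2.1
      have hq2 := (hπ0 q.2).1 hq.2.2.2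
      have e1 : g p.1 = g q.1 := congrArg Prod.fst hpq
      have e2 : g p.2 = g q.2 := congrArg Prod.snd hpq
      have v1 : p.1.val = q.1.val := by
        rw [← hginv p.1 hp1, ← hginv q.1 hq1, e1]
      have v2 : p.2.val = q.2.val := by
        rw [← hginv p.2 hp2, ← hginv q.2 hq2, e2]
      exact Prod.ext (ZMod.val_injective n v1) (ZMod.val_injective n v2)
  -- put it together
  have hmain : monoAPCount n 4 c ≤ 10 * t ^ 2 + minMonoAPCount t 4 := by
    rw [monoAPCount_eq_card_s14, ← hSdef, ← hc']
    calc S.card ≤ (F0 ∪ F1).card := Finset.card_le_card hsub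
      _ ≤ F0.card + F1.card := Finset.card_union_le _ _
      _ ≤ monoAPCount t 4 c' + 10 * t ^ 2 := by
          rw [hcard1]; exact Nat.add_le_add_right hcard0 _
      _ = 10 * t ^ 2 + monoAPCount t 4 c' := Nat.add_comm _ _
  exact le_trans (Nat.sInf_le ⟨c, rfl⟩) hmain
end

section
/- For every integer t ≥ 2, (min over 2-colorings c of Z_{37t} of M_5(37t, c)) ≤ 36·t² + (min over 2-colorings c' of Z_t of M_5(t, c')). Equivalently, m_5(Z_{37t}) ≤ (36 + m_5(Z_t))/37², where m_5(Z_n) = (min_c M_5(n,c))/n². -/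
/-- A good 2-coloring pattern (of `Z_37`), as a function on `ℕ`. -/
def chiN : ℕ → Fin 2 := fun m =>
  if m ∈ [2,5,6,8,13,14,15,17,18,19,20,22,23,24,29,31,32,35] then 1 else 0

set_option maxRecDepth 10000 in
lemma natProp : ∀ a d : Fin 37, d.val ≠ 0 → ∃ i j : Fin 5,
    (a.val + i.val * d.val) % 37 ≠ 0 ∧ (a.val + j.val * d.val) % 37 ≠ 0 ∧
      chiN ((a.val + i.val * d.val) % 37) ≠ chiN ((a.val + j.val * d.val) % 37) := by decide

lemma natProp' : ∀ a < 37, ∀ d < 37, d ≠ 0 → ∃ i j : Fin 5,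
    (a + i.val * d) % 37 ≠ 0 ∧ (a + j.val * d) % 37 ≠ 0 ∧
      chiN ((a + i.val * d) % 37) ≠ chiN ((a + j.val * d) % 37) :=
  fun a ha d hd hd0 => natProp ⟨a, ha⟩ ⟨d, hd⟩ hd0

/-- The induced coloring of `Z_37`. -/
def chi : ZMod 37 → Fin 2 := fun x => chiN x.val

theorem m5_recursive_37 :
    ∀ t : ℕ, 2 ≤ t →
      minMonoAPCount (37 * t) 5 ≤ 36 * t ^ 2 + minMonoAPCount t 5 := by
  intro t ht
  haveI : NeZero t := ⟨by omega⟩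
  haveI : NeZero (37 * t) := ⟨by positivity⟩
  -- pick an optimal coloring of Z_t
  have hne : ({m : ℕ | ∃ c : ZMod t → Fin 2, monoAPCount t 5 c = m}).Nonempty :=
    ⟨_, fun _ => 0, rfl⟩
  obtain ⟨c', hc'⟩ := Nat.sInf_mem hne
  -- projection, section, and lift maps
  set π : ZMod (37 * t) →+* ZMod 37 := ZMod.castHom (dvd_mul_right 37 t) (ZMod 37) with hπ
  set ψ : ZMod (37 * t) → ZMod t := fun x => ((x.val / 37 : ℕ) : ZMod t) with hψ
  set f : ZMod t → ZMod (37 * t) := fun y => ((37 * y.val : ℕ) : ZMod (37 * t)) with hf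
  set c : ZMod (37 * t) → Fin 2 := fun x => if π x = 0 then c' (ψ x) else chi (π x) with hc
  have h0 : ((37 * t : ℕ) : ZMod (37 * t)) = 0 := ZMod.natCast_self _
  push_cast at h0
  have keyN : ∀ m : ℕ, ((37 * (m % t) : ℕ) : ZMod (37 * t)) = ((37 * m : ℕ) : ZMod (37 * t)) := by
    intro m
    conv_rhs => rw [← Nat.div_add_mod m t]
    push_cast
    linear_combination (-((m / t : ℕ) : ZMod (37 * t))) * h0
  have hπval : ∀ x : ZMod (37 * t), π x = ((x.val : ℕ) : ZMod 37) := by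
    intro x
    rw [hπ, ZMod.castHom_apply, ← ZMod.natCast_val]
  have hker : ∀ x : ZMod (37 * t), π x = 0 ↔ 37 ∣ x.val := by
    intro x
    rw [hπval, ZMod.natCast_eq_zero_iff]
  have hπf : ∀ y : ZMod t, π (f y) = 0 := by
    intro y
    rw [hker, hf]
    have h37 : (37 * y.val) % (37 * t) = 37 * (y.val % t) := Nat.mul_mod_mul_left _ _ _
    simp only [ZMod.val_natCast, h37]
    exact Dvd.intro _ rfl
  have hfψ : ∀ x : ZMod (37 * t), π x = 0 → f (ψ x) = x := by
    intro x hx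
    obtain ⟨u, hu⟩ := (hker x).mp hx
    have hx' : x = ((x.val : ℕ) : ZMod (37 * t)) := by
      rw [ZMod.natCast_val, ZMod.cast_id]
    have h1 : f (ψ x) = ((37 * (u % t) : ℕ) : ZMod (37 * t)) := by
      rw [hf, hψ]
      simp only [hu, Nat.mul_div_cancel_left _ (by norm_num : 0 < 37), ZMod.val_natCast]
    rw [h1, keyN u, ← hu, ← hx']
  have hψf : ∀ y : ZMod t, ψ (f y) = y := by
    intro y
    rw [hψ, hf]
    simp only [ZMod.val_natCast, Nat.mul_mod_mul_left,
      Nat.mul_div_cancel_left _ (by norm_num : 0 < 37)]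
    rw [Nat.mod_eq_of_lt y.val_lt, ZMod.natCast_val, ZMod.cast_id]
  have hfinj : Function.Injective f := by
    intro y y' h
    have h2 := congrArg ψ h
    rwa [hψf, hψf] at h2
  have hfadd : ∀ y e : ZMod t, f (y + e) = f y + f e := by
    intro y e
    show ((37 * (y + e).val : ℕ) : ZMod (37 * t))
        = ((37 * y.val : ℕ) : ZMod (37 * t)) + ((37 * e.val : ℕ) : ZMod (37 * t))
    rw [ZMod.val_add, keyN]
    push_cast
    ring
  have hf0 : f 0 = 0 := by
    show ((37 * (0 : ZMod t).val : ℕ) : ZMod (37 * t)) = 0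
    rw [ZMod.val_zero]
    norm_num
  have hfsmul : ∀ (i : ℕ) (e : ZMod t), f (i • e) = i • f e := by
    intro i e
    induction i with
    | zero => simpa using hf0
    | succ n ih => rw [succ_nsmul, succ_nsmul, hfadd, ih]
  have hcf : ∀ z : ZMod t, c (f z) = c' z := by
    intro z
    rw [hc]
    simp [hπf z, hψf]
  -- the monochromatic set for c
  set S : Set (ZMod (37 * t) × ZMod (37 * t)) :=
    {p | ∀ i < 5, c (p.1 + i • p.2) = c p.1} with hS
  set A : Set (ZMod (37 * t)) := {x | ¬ (π x = 0)} with hA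
  set B : Set (ZMod (37 * t)) := {x | π x = 0} with hB
  set T : Set (ZMod t × ZMod t) := {p | ∀ i < 5, c' (p.1 + i • p.2) = c' p.1} with hT
  -- every monochromatic pair has difference in the kernel
  have hdker : ∀ p ∈ S, π p.2 = 0 := by
    rintro ⟨a, d⟩ hp
    by_contra hd
    have hDval : (π d).val ≠ 0 := fun h => hd ((ZMod.val_eq_zero (π d)).mp h)
    obtain ⟨i, j, h1, h2, h3⟩ :=
      natProp' (π a).val (π a).val_lt (π d).val (π d).val_lt hDval
    have hterm : ∀ m : ℕ, m < 5 →
        (π (a + m • d)).val = ((π a).val + m * (π d).val) % 37 := by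
      intro m hm
      rw [map_add, map_nsmul, nsmul_eq_mul, ZMod.val_add, ZMod.val_mul, ZMod.val_natCast,
        Nat.mod_eq_of_lt (by omega : m < 37)]
      generalize m * (π d).val = k
      omega
    have hcterm : ∀ m : ℕ, m < 5 → ((π a).val + m * (π d).val) % 37 ≠ 0 →
        c (a + m • d) = chiN (((π a).val + m * (π d).val) % 37) := by
      intro m hm hnz
      have hne0 : π (a + m • d) ≠ 0 := by
        intro h
        apply hnz
        rw [← hterm m hm, h, ZMod.val_zero]
      rw [hc]
      simp only [if_neg hne0]
      show chi (π (a + m • d)) = _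
      rw [chi, hterm m hm]
    have e1 := hp i.val i.isLt
    have e2 := hp j.val j.isLt
    simp only [hS, Set.mem_setOf_eq] at e1 e2
    have := (hcterm i.val i.isLt h1).symm.trans (e1.trans (e2.symm.trans (hcterm j.val j.isLt h2)))
    exact h3 this
  have hsub : S ⊆ (A ×ˢ B) ∪ (Prod.map f f '' T) := by
    rintro ⟨a, d⟩ hp
    have hd := hdker _ hp
    by_cases ha : π a = 0
    · right
      refine ⟨(ψ a, ψ d), ?_, ?_⟩
      · intro i hi
        have h1 : f (ψ a + i • ψ d) = a + i • d := by
          rw [hfadd, hfsmul, hfψ a ha, hfψ d hd]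
        have e1 := hp i hi
        calc c' (ψ a + i • ψ d) = c (f (ψ a + i • ψ d)) := (hcf _).symm
          _ = c (a + i • d) := by rw [h1]
          _ = c a := e1
          _ = c (f (ψ a)) := by rw [hfψ a ha]
          _ = c' (ψ a) := hcf _
      · simp [Prod.map, hfψ a ha, hfψ d hd]
    · left
      exact ⟨ha, hd⟩
  -- cardinalities
  have hBcard : B.ncard = t := by
    have hBr : B = Set.range f := by
      ext x
      constructor
      · intro hx; exact ⟨ψ x, hfψ x hx⟩
      · rintro ⟨y, rfl⟩; exact hπf y
    rw [hBr, ← Nat.card_coe_set_eq, Nat.card_range_of_injective hfinj,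
      Nat.card_eq_fintype_card, ZMod.card]
  have hAcard : A.ncard = 36 * t := by
    have h1 : B.ncard + A.ncard = Nat.card (ZMod (37 * t)) := by
      have hAB : A = Bᶜ := by ext x; simp [hA, hB]
      rw [hAB]
      exact Set.ncard_add_ncard_compl B
    rw [Nat.card_eq_fintype_card, ZMod.card, hBcard] at h1
    omega
  have hprodcard : (A ×ˢ B).ncard = 36 * t * t := by
    rw [← Nat.card_coe_set_eq, Nat.card_congr (Equiv.Set.prod A B), Nat.card_prod,
      Nat.card_coe_set_eq, Nat.card_coe_set_eq, hAcard, hBcard]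
  have himgcard : (Prod.map f f '' T).ncard ≤ monoAPCount t 5 c' :=
    Set.ncard_image_le T.toFinite
  have hmain : monoAPCount (37 * t) 5 c ≤ 36 * t ^ 2 + monoAPCount t 5 c' := by
    calc monoAPCount (37 * t) 5 c = S.ncard := rfl
      _ ≤ ((A ×ˢ B) ∪ (Prod.map f f '' T)).ncard := Set.ncard_le_ncard hsub (Set.toFinite _)
      _ ≤ (A ×ˢ B).ncard + (Prod.map f f '' T).ncard := Set.ncard_union_le _ _
      _ ≤ 36 * t * t + monoAPCount t 5 c' := by rw [hprodcard]; omega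
      _ = 36 * t ^ 2 + monoAPCount t 5 c' := by ring_nf
  calc minMonoAPCount (37 * t) 5 ≤ monoAPCount (37 * t) 5 c := Nat.sInf_le ⟨c, rfl⟩
    _ ≤ 36 * t ^ 2 + monoAPCount t 5 c' := hmain
    _ = 36 * t ^ 2 + minMonoAPCount t 5 := by rw [hc']; rfl
end
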